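/- arXiv:0709.4070 — 7 statements merged into one kernel-verified Lean document; each statement's English description precedes it below -/
import Mathlib

section
/- For every integer k ≥ 1, the number of lattice points in the k-th dilate of the triangle T with vertices (0,0), (1, (D-1)/D), and (D,0) (where D ≥ 2 is an integer) equals the number of lattice points in the k-th dilate of the integral triangle T' with vertices (1,0), (1,1), and (D,0). -/
open Pointwise
/-- Number of integer lattice points of `ℤ²` lying in a subset of `ℝ²`. -/
noncomputable def latticeCount2 (S : Set (ℝ × ℝ)) : ℕ :=
  {p : ℤ × ℤ | ((p.1 : ℝ), (p.2 : ℝ)) ∈ S}.ncard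

/-- The rational triangle with vertices `(0,0)`, `(1,(D-1)/D)`, `(D,0)`. -/
noncomputable def TriT (D : ℤ) : Set (ℝ × ℝ) :=
  convexHull ℝ {(0, 0), (1, ((D : ℝ) - 1) / (D : ℝ)), ((D : ℝ), 0)}

/-- The integral triangle with vertices `(1,0)`, `(1,1)`, `(D,0)`. -/
noncomputable def TriT' (D : ℤ) : Set (ℝ × ℝ) :=
  convexHull ℝ {(1, 0), (1, 1), ((D : ℝ), 0)}

open Finset

section NatArith

-- block sum: ∑_{u < q*m} u/q
lemma sum_div_block (q m : ℕ) (hq : 0 < q) :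
    2 * ∑ u ∈ range (q * m), u / q + q * m = q * m * m := by
  induction m with
  | zero => simp
  | succ m ih =>
    have hsplit : ∑ u ∈ range (q * (m + 1)), u / q
        = ∑ u ∈ range (q * m), u / q + q * m := by
      have h1 : q * (m + 1) = q * m + q := by ring
      rw [h1, Finset.sum_range_add]
      congr 1
      have : ∀ i ∈ range q, (q * m + i) / q = m := by
        intro i hi
        rw [Nat.mul_add_div hq]
        simp [Nat.div_eq_of_lt (mem_range.mp hi)]
      rw [Finset.sum_congr rfl this]
      simp [mul_comm]
    rw [hsplit]
    nlinarith [ih]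

-- partial block: ∑_{u < q*m + c} u/q with c ≤ q
lemma sum_div_split (q m c : ℕ) (hq : 0 < q) (hc : c ≤ q) :
    ∑ u ∈ range (q * m + c), u / q = ∑ u ∈ range (q * m), u / q + c * m := by
  rw [Finset.sum_range_add]
  congr 1
  have : ∀ i ∈ range c, (q * m + i) / q = m := by
    intro i hi
    rw [Nat.mul_add_div hq]
    simp [Nat.div_eq_of_lt (lt_of_lt_of_le (mem_range.mp hi) hc)]
  rw [Finset.sum_congr rfl this]
  simp


lemma ceil_plus (d' x : ℕ) :
    (d' + 1) * x / (d' + 2) + (x + d' + 1) / (d' + 2) = x := by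
  have hq : 0 < d' + 2 := by omega
  obtain ⟨a, b, hb, hx⟩ : ∃ a b, b < d' + 2 ∧ x = (d' + 2) * a + b :=
    ⟨x / (d' + 2), x % (d' + 2), Nat.mod_lt _ hq, by rw [Nat.div_add_mod]⟩
  subst hx
  rcases b with _ | b'
  · have h1 : (d' + 1) * ((d' + 2) * a + 0) = (d' + 2) * ((d' + 1) * a) + 0 := by ring
    have h2 : (d' + 2) * a + 0 + d' + 1 = (d' + 2) * a + (d' + 1) := by ring
    rw [h1, Nat.mul_add_div hq, h2, Nat.mul_add_div hq]
    simp [Nat.div_eq_of_lt]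
    ring
  · have hb' : b' ≤ d' := by omega
    obtain ⟨e, he⟩ : ∃ e, d' = b' + e := ⟨d' - b', by omega⟩
    have h1 : (d' + 1) * ((d' + 2) * a + (b' + 1))
        = (d' + 2) * ((d' + 1) * a + b') + (e + 1) := by rw [he]; ring
    have h2 : (d' + 2) * a + (b' + 1) + d' + 1 = (d' + 2) * (a + 1) + b' := by rw [he]; ring
    rw [h1, Nat.mul_add_div hq, h2, Nat.mul_add_div hq]
    rw [Nat.div_eq_of_lt (by omega), Nat.div_eq_of_lt (by omega)]
    ring

lemma sum_pred_div (d' n : ℕ) :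
    ∑ x ∈ range (n + 1), (d' + 1) * x / (d' + 2) + n + ∑ x ∈ range n, x / (d' + 2)
      = ∑ x ∈ range (n + 1), x := by
  have h1 : ∑ x ∈ range (n + 1), ((x + d' + 1) / (d' + 2))
      = n + ∑ x ∈ range n, x / (d' + 2) := by
    rw [Finset.sum_range_succ']
    have : ∀ i ∈ range n, (i + 1 + d' + 1) / (d' + 2) = i / (d' + 2) + 1 := by
      intro i _
      have h : i + 1 + d' + 1 = i + (d' + 2) := by omega
      rw [h, Nat.add_div_right _ (by omega)]
    rw [Finset.sum_congr rfl this, Nat.div_eq_of_lt (by omega)]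
    rw [Finset.sum_add_distrib]
    simp [add_comm]
  calc ∑ x ∈ range (n + 1), (d' + 1) * x / (d' + 2) + n + ∑ x ∈ range n, x / (d' + 2)
      = ∑ x ∈ range (n + 1), (d' + 1) * x / (d' + 2)
        + ∑ x ∈ range (n + 1), ((x + d' + 1) / (d' + 2)) := by rw [h1]; ring
    _ = ∑ x ∈ range (n + 1), ((d' + 1) * x / (d' + 2) + (x + d' + 1) / (d' + 2)) := by
        rw [Finset.sum_add_distrib]
    _ = ∑ x ∈ range (n + 1), x := by
        exact Finset.sum_congr rfl fun x _ => ceil_plus d' x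


lemma key_id2 (d' n : ℕ) :
    2 * (∑ x ∈ range (n + 1), ((d' + 1) * x / (d' + 2) + 1)
      + ∑ u ∈ range (n * (d' + 1)), (u / (d' + 2) + 1))
    = 2 * ∑ u ∈ range (n * (d' + 1) + 1), (u / (d' + 1) + 1) := by
  have hq2 : 0 < d' + 2 := by omega
  have hq1 : 0 < d' + 1 := by omega
  simp only [Finset.sum_add_distrib, Finset.sum_const, Finset.card_range, smul_eq_mul, mul_one]
  conv_rhs => rw [Finset.sum_range_succ]
  rw [Nat.mul_div_cancel n hq1]
  have hpred := sum_pred_div d' n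
  have hT := Finset.sum_range_id_mul_two (n + 1)
  simp only [Nat.add_sub_cancel] at hT
  have hS3 : 2 * ∑ u ∈ range (n * (d' + 1)), u / (d' + 1) + (d' + 1) * n
      = (d' + 1) * n * n := by
    have h := sum_div_block (d' + 1) n hq1
    rw [mul_comm (d' + 1) n] at h
    zify at h ⊢
    linear_combination h
  obtain ⟨m, c, hc, hn⟩ : ∃ m c, c < d' + 2 ∧ n = (d' + 2) * m + c :=
    ⟨n / (d' + 2), n % (d' + 2), Nat.mod_lt _ hq2, (Nat.div_add_mod n (d' + 2)).symm⟩
  have hB1 := sum_div_block (d' + 2) m hq2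
  have hS1 : ∑ x ∈ range n, x / (d' + 2)
      = ∑ u ∈ range ((d' + 2) * m), u / (d' + 2) + c * m := by
    rw [hn]; exact sum_div_split (d' + 2) m c hq2 (by omega)
  rcases c with _ | c'
  · -- c = 0
    have harg : n * (d' + 1) = (d' + 2) * ((d' + 1) * m) := by rw [hn]; ring
    have hS2 := sum_div_block (d' + 2) ((d' + 1) * m) hq2
    rw [← harg] at hS2
    subst hn
    zify at hpred hT hS1 hB1 hS2 hS3 ⊢
    linear_combination 2 * hpred + hT - 2 * hS1 - hB1 + hS2 - hS3
  · -- c = c' + 1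
    obtain ⟨e, he⟩ : ∃ e, d' = c' + e := ⟨d' - c', by omega⟩
    have harg : n * (d' + 1) = (d' + 2) * ((d' + 1) * m + c') + (e + 1) := by
      rw [hn, he]; ring
    have hB2 := sum_div_block (d' + 2) ((d' + 1) * m + c') hq2
    have hS2 : ∑ u ∈ range (n * (d' + 1)), u / (d' + 2)
        = ∑ u ∈ range ((d' + 2) * ((d' + 1) * m + c')), u / (d' + 2)
          + (e + 1) * ((d' + 1) * m + c') := by
      rw [harg]; exact sum_div_split (d' + 2) ((d' + 1) * m + c') (e + 1) hq2 (by omega)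
    subst he
    subst hn
    zify at hpred hT hS1 hB1 hS2 hB2 hS3 ⊢
    linear_combination 2 * hpred + hT - 2 * hS1 - hB1 + 2 * hS2 + hB2 - hS3


lemma key_id (d' n : ℕ) :
    ∑ x ∈ range (n + 1), ((d' + 1) * x / (d' + 2) + 1)
      + ∑ u ∈ range (n * (d' + 1)), (u / (d' + 2) + 1)
    = ∑ u ∈ range (n * (d' + 1) + 1), (u / (d' + 1) + 1) :=
  Nat.eq_of_mul_eq_mul_left (by norm_num) (key_id2 d' n)

end NatArith

section Geometry

lemma isLin2 (a b : ℝ) : IsLinearMap ℝ (fun p : ℝ × ℝ => a * p.1 + b * p.2) := by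
  constructor
  · intro p q; simp [Prod.fst_add, Prod.snd_add]; ring
  · intro c p; simp [Prod.smul_fst, Prod.smul_snd, smul_eq_mul]; ring

lemma mem_tri {p q r x : ℝ × ℝ} {a b c : ℝ} (ha : 0 ≤ a) (hb : 0 ≤ b) (hc : 0 ≤ c)
    (habc : a + b + c = 1) (hx : x = a • p + b • q + c • r) :
    x ∈ convexHull ℝ ({p, q, r} : Set (ℝ × ℝ)) := by
  have hp : p ∈ convexHull ℝ ({p, q, r} : Set (ℝ × ℝ)) :=
    subset_convexHull ℝ _ (by simp)
  have hq : q ∈ convexHull ℝ ({p, q, r} : Set (ℝ × ℝ)) :=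
    subset_convexHull ℝ _ (by simp)
  have hr : r ∈ convexHull ℝ ({p, q, r} : Set (ℝ × ℝ)) :=
    subset_convexHull ℝ _ (by simp)
  have hconv := convex_convexHull ℝ ({p, q, r} : Set (ℝ × ℝ))
  by_cases h : b + c = 0
  · have hb0 : b = 0 := by linarith
    have hc0 : c = 0 := by linarith
    have ha1 : a = 1 := by linarith
    rw [hx, hb0, hc0, ha1]; simpa using hp
  · have ht : 0 < b + c := lt_of_le_of_ne (by linarith) (Ne.symm h)
    have hz := hconv hq hr (div_nonneg hb ht.le) (div_nonneg hc ht.le)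
      (by field_simp)
    have hfin := hconv hp hz ha ht.le (by linarith)
    have e1 : (b + c) * (b / (b + c)) = b := by field_simp
    have e2 : (b + c) * (c / (b + c)) = c := by field_simp
    have heq : a • p + (b + c) • ((b / (b + c)) • q + (c / (b + c)) • r)
        = a • p + b • q + c • r := by
      rw [smul_add, smul_smul, smul_smul, e1, e2, add_assoc]
    rw [hx, ← heq]
    exact hfin

lemma hull_le {S : Set (ℝ × ℝ)} {u v a b c : ℝ} (hmem : (u, v) ∈ convexHull ℝ S)
    (hS : ∀ w ∈ S, a * w.1 + b * w.2 ≤ c) : a * u + b * v ≤ c := by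
  have := convexHull_min hS (convex_halfSpace_le (isLin2 a b) c) hmem
  exact this

lemma memT_iff (e kr : ℝ) (he : 2 ≤ e) (hk : 1 ≤ kr) (u v : ℝ) :
    (u, v) ∈ kr • convexHull ℝ ({(0, 0), (1, (e - 1) / e), (e, 0)} : Set (ℝ × ℝ))
      ↔ 0 ≤ v ∧ e * v ≤ (e - 1) * u ∧ u + e * v ≤ kr * e := by
  have he0 : (0:ℝ) < e := by linarith
  have hk0 : (0:ℝ) < kr := by linarith
  have hne1 : kr ≠ 0 := ne_of_gt hk0
  have hne2 : e ≠ 0 := ne_of_gt he0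
  have hne3 : e - 1 ≠ 0 := by intro h; nlinarith
  have hfrac : e * (kr * ((e - 1) / e)) = kr * (e - 1) := by field_simp
  have hv2 : 0 ≤ kr * ((e - 1) / e) :=
    mul_nonneg hk0.le (div_nonneg (by linarith) he0.le)
  rw [← convexHull_smul]
  have hset : kr • ({(0, 0), (1, (e - 1) / e), (e, 0)} : Set (ℝ × ℝ))
      = {((0:ℝ), (0:ℝ)), (kr, kr * ((e - 1) / e)), (kr * e, 0)} := by
    rw [Set.smul_set_insert, Set.smul_set_insert, Set.smul_set_singleton]
    simp [Prod.smul_mk, smul_eq_mul]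
  rw [hset]
  constructor
  · intro hmem
    refine ⟨?_, ?_, ?_⟩
    · have := hull_le hmem (a := 0) (b := -1) (c := 0) ?_
      · linarith
      · rintro w (rfl | rfl | rfl) <;> simp only <;> nlinarith
    · have := hull_le hmem (a := -(e-1)) (b := e) (c := 0) ?_
      · linarith
      · rintro w (rfl | rfl | rfl) <;> simp only <;> nlinarith [mul_pos hk0 he0]
    · have := hull_le hmem (a := 1) (b := e) (c := kr * e) ?_
      · linarith
      · rintro w (rfl | rfl | rfl) <;> simp only <;> nlinarith [mul_pos hk0 he0]
  · rintro ⟨h1, h2, h3⟩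
    set β := e * v / (kr * (e - 1)) with hβ
    set γ := ((e - 1) * u - e * v) / ((e - 1) * kr * e) with hγ
    have hkre : kr * (e - 1) > 0 := by nlinarith
    have hβ0 : 0 ≤ β := div_nonneg (by nlinarith) hkre.le
    have hγ0 : 0 ≤ γ := div_nonneg (by linarith) (by nlinarith)
    have hsum : β + γ = (u + e * v) / (kr * e) := by
      rw [hβ, hγ]; field_simp; try ring
    have hβγ1 : β + γ ≤ 1 := by
      rw [hsum]; rw [div_le_one (by positivity)]; linarith
    refine mem_tri (a := 1 - β - γ) (b := β) (c := γ) (by linarith) hβ0 hγ0 (by ring) ?_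
    have hx : (1 - β - γ) • ((0:ℝ), (0:ℝ)) + β • (kr, kr * ((e - 1) / e)) + γ • (kr * e, 0)
        = (β * kr + γ * (kr * e), β * (kr * ((e - 1) / e))) := by
      simp [Prod.smul_mk, smul_eq_mul, Prod.ext_iff]
    have h1' : β * kr + γ * (kr * e) = u := by
      rw [hβ, hγ]; field_simp; try ring
    have h2' : β * (kr * ((e - 1) / e)) = v := by
      rw [hβ]; field_simp; try ring
    rw [hx, Prod.mk.injEq]
    exact ⟨h1'.symm, h2'.symm⟩

lemma memT'_iff (e kr : ℝ) (he : 2 ≤ e) (hk : 1 ≤ kr) (u v : ℝ) :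
    (u, v) ∈ kr • convexHull ℝ ({(1, 0), (1, 1), (e, 0)} : Set (ℝ × ℝ))
      ↔ 0 ≤ v ∧ kr ≤ u ∧ u + (e - 1) * v ≤ kr * e := by
  have he0 : (0:ℝ) < e := by linarith
  have hk0 : (0:ℝ) < kr := by linarith
  have hne1 : kr ≠ 0 := ne_of_gt hk0
  have hne3 : e - 1 ≠ 0 := by intro h; nlinarith
  rw [← convexHull_smul]
  have hset : kr • ({(1, 0), (1, 1), (e, 0)} : Set (ℝ × ℝ))
      = {(kr, (0:ℝ)), (kr, kr), (kr * e, 0)} := by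
    rw [Set.smul_set_insert, Set.smul_set_insert, Set.smul_set_singleton]
    simp only [Prod.smul_mk, smul_eq_mul, mul_one, mul_zero]
  rw [hset]
  constructor
  · intro hmem
    refine ⟨?_, ?_, ?_⟩
    · have := hull_le hmem (a := 0) (b := -1) (c := 0) ?_
      · linarith
      · rintro w (rfl | rfl | rfl) <;> simp only <;> nlinarith
    · have := hull_le hmem (a := -1) (b := 0) (c := -kr) ?_
      · linarith
      · rintro w (rfl | rfl | rfl) <;> simp only <;> nlinarith [mul_pos hk0 he0]
    · have := hull_le hmem (a := 1) (b := e - 1) (c := kr * e) ?_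
      · linarith
      · rintro w (rfl | rfl | rfl) <;> simp only <;> nlinarith [mul_pos hk0 he0]
  · rintro ⟨h1, h2, h3⟩
    set β := v / kr with hβ
    set γ := (u - kr) / (kr * (e - 1)) with hγ
    have hkre : kr * (e - 1) > 0 := by nlinarith
    have hβ0 : 0 ≤ β := div_nonneg h1 hk0.le
    have hγ0 : 0 ≤ γ := div_nonneg (by linarith) hkre.le
    have hsum : β + γ = ((e - 1) * v + u - kr) / (kr * (e - 1)) := by
      rw [hβ, hγ]; field_simp; try ring
    have hβγ1 : β + γ ≤ 1 := by
      rw [hsum, div_le_one hkre]; nlinarith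
    refine mem_tri (a := 1 - β - γ) (b := β) (c := γ) (by linarith) hβ0 hγ0 (by ring) ?_
    have hx : (1 - β - γ) • ((kr:ℝ), (0:ℝ)) + β • (kr, kr) + γ • (kr * e, 0)
        = ((1 - β - γ) * kr + β * kr + γ * (kr * e), β * kr) := by
      simp [Prod.smul_mk, smul_eq_mul, Prod.ext_iff]
    have h1' : (1 - β - γ) * kr + β * kr + γ * (kr * e) = u := by
      rw [hβ, hγ]; field_simp; try ring
    have h2' : β * kr = v := by
      rw [hβ]; field_simp
    rw [hx, Prod.mk.injEq]
    exact ⟨h1'.symm, h2'.symm⟩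


end Geometry

section Counting

def predA (d' n x y : ℕ) : Prop :=
  (d' + 2) * y ≤ (d' + 1) * x ∧ x + (d' + 2) * y ≤ n * (d' + 2)
instance (d' n x y : ℕ) : Decidable (predA d' n x y) := by unfold predA; infer_instance
def predB (d' n x y : ℕ) : Prop := x + (d' + 1) * y ≤ n * (d' + 2)
instance (d' n x y : ℕ) : Decidable (predB d' n x y) := by unfold predB; infer_instance
def natA (d' n : ℕ) : Finset (ℕ × ℕ) :=
  (Finset.range (n * (d' + 2) + 1) ×ˢ Finset.range (n + 1)).filter
    (fun p => predA d' n p.1 p.2)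
def natB (d' n : ℕ) : Finset (ℕ × ℕ) :=
  (Finset.Ico n (n * (d' + 2) + 1) ×ˢ Finset.range (n + 1)).filter
    (fun p => predB d' n p.1 p.2)


lemma card_filter_product (s t : Finset ℕ) (P : ℕ → ℕ → Prop) [∀ x y, Decidable (P x y)] :
    ((s ×ˢ t).filter (fun p => P p.1 p.2)).card
      = ∑ x ∈ s, (t.filter (fun y => P x y)).card := by
  rw [Finset.card_eq_sum_card_fiberwise (f := Prod.fst) (t := s)
    (fun p hp => (Finset.mem_product.mp (Finset.mem_filter.mp hp).1).1)]
  refine Finset.sum_congr rfl fun x hx => ?_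
  apply Finset.card_bij (fun p _ => p.2)
  · rintro ⟨a, b⟩ hp
    simp only [Finset.mem_filter, Finset.mem_product] at hp ⊢
    obtain ⟨⟨⟨_, hb⟩, hP⟩, rfl⟩ := hp
    exact ⟨hb, hP⟩
  · rintro ⟨a, b⟩ ha ⟨a2, b2⟩ ha2 h
    simp only [Finset.mem_filter, Finset.mem_product] at ha ha2
    simp only at h
    ext
    · rw [ha.2, ha2.2]
    · exact h
  · intro y hy
    simp only [Finset.mem_filter] at hy
    refine ⟨(x, y), ?_, rfl⟩
    simp only [Finset.mem_filter, Finset.mem_product]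
    exact ⟨⟨⟨hx, hy.1⟩, hy.2⟩, trivial⟩

lemma colA_low (d' n x : ℕ) (hx' : x ≤ n) :
    (Finset.range (n + 1)).filter (fun y => predA d' n x y)
      = Finset.range ((d' + 1) * x / (d' + 2) + 1) := by
  ext y
  rw [Finset.mem_filter]
  simp only [Finset.mem_filter, Finset.mem_range, Nat.lt_succ_iff, predA,
    Nat.le_div_iff_mul_le (show 0 < d' + 2 by omega)]
  constructor
  · rintro ⟨-, h1, -⟩
    rw [mul_comm] at h1; exact h1
  · intro h
    rw [mul_comm] at h
    have e1 : (d' + 1) * x ≤ (d' + 1) * n := Nat.mul_le_mul_left _ hx'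
    have e2 : (d' + 1) * n < (d' + 2) * (n + 1) := by nlinarith
    have e3 : (d' + 2) * y < (d' + 2) * (n + 1) := by linarith
    have e4 : y < n + 1 := Nat.lt_of_mul_lt_mul_left e3
    have e5 : (d' + 2) * x ≤ (d' + 2) * n := Nat.mul_le_mul_left _ hx'
    have e6 : (d' + 2) * x = x + (d' + 1) * x := by ring
    have e7 : n * (d' + 2) = (d' + 2) * n := by ring
    exact ⟨by omega, h, by linarith⟩

lemma colA_high (d' n x u : ℕ) (hx : n + 1 ≤ x) (hxu : x + u = n * (d' + 2)) :
    (Finset.range (n + 1)).filter (fun y => predA d' n x y)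
      = Finset.range (u / (d' + 2) + 1) := by
  ext y
  rw [Finset.mem_filter]
  simp only [Finset.mem_filter, Finset.mem_range, Nat.lt_succ_iff, predA,
    Nat.le_div_iff_mul_le (show 0 < d' + 2 by omega)]
  constructor
  · rintro ⟨-, -, h2⟩
    rw [mul_comm]; linarith
  · intro h
    rw [mul_comm] at h
    have e1 : n * (d' + 2) ≤ x * (d' + 2) := Nat.mul_le_mul_right _ (by omega)
    have e2 : x * (d' + 2) = (d' + 1) * x + x := by ring
    have e3 : (d' + 2) * y < (d' + 2) * n + (d' + 2) := by linarith
    have e4 : (d' + 2) * y < (d' + 2) * (n + 1) := by linarith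
    have e5 : y < n + 1 := Nat.lt_of_mul_lt_mul_left e4
    exact ⟨by omega, by linarith, by linarith⟩

lemma cardA (d' n : ℕ) :
    (natA d' n).card
      = ∑ x ∈ range (n + 1), ((d' + 1) * x / (d' + 2) + 1)
        + ∑ u ∈ range (n * (d' + 1)), (u / (d' + 2) + 1) := by
  rw [natA, card_filter_product]
  rw [show n * (d' + 2) + 1 = (n + 1) + n * (d' + 1) from by ring, Finset.sum_range_add]
  congr 1
  · refine Finset.sum_congr rfl fun x hx => ?_
    rw [colA_low d' n x (by simpa [Nat.lt_succ_iff] using hx), Finset.card_range]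
  · rw [← Finset.sum_range_reflect (fun u => u / (d' + 2) + 1) (n * (d' + 1))]
    refine Finset.sum_congr rfl fun i hi => ?_
    have hi' : i < n * (d' + 1) := Finset.mem_range.mp hi
    rw [colA_high d' n (n + 1 + i) (n * (d' + 1) - 1 - i) (by omega)
      (by have : n * (d' + 2) = n * (d' + 1) + n := by ring
          omega), Finset.card_range]

lemma colB (d' n x u : ℕ) (hx : n ≤ x) (hxu : x + u = n * (d' + 2)) :
    (Finset.range (n + 1)).filter (fun y => predB d' n x y)
      = Finset.range (u / (d' + 1) + 1) := by
  ext y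
  rw [Finset.mem_filter]
  simp only [Finset.mem_filter, Finset.mem_range, Nat.lt_succ_iff, predB,
    Nat.le_div_iff_mul_le (show 0 < d' + 1 by omega)]
  constructor
  · rintro ⟨-, h1⟩
    rw [mul_comm]; linarith
  · intro h
    rw [mul_comm] at h
    have e1 : n * (d' + 2) = n * (d' + 1) + n := by ring
    have e2 : (d' + 1) * y ≤ (d' + 1) * n := by
      have : (d' + 1) * n = n * (d' + 1) := by ring
      linarith
    have e3 : y ≤ n := Nat.le_of_mul_le_mul_left e2 (by omega)
    exact ⟨e3, by linarith⟩

lemma cardB (d' n : ℕ) :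
    (natB d' n).card = ∑ u ∈ range (n * (d' + 1) + 1), (u / (d' + 1) + 1) := by
  rw [natB, card_filter_product]
  rw [Finset.sum_Ico_eq_sum_range]
  rw [show n * (d' + 2) + 1 - n = n * (d' + 1) + 1 from by
    have : n * (d' + 2) + 1 = n * (d' + 1) + 1 + n := by ring
    omega]
  rw [← Finset.sum_range_reflect (fun u => u / (d' + 1) + 1) (n * (d' + 1) + 1)]
  refine Finset.sum_congr rfl fun i hi => ?_
  have hi' : i < n * (d' + 1) + 1 := Finset.mem_range.mp hi
  rw [colB d' n (n + i) (n * (d' + 1) + 1 - 1 - i) (by omega)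
    (by have : n * (d' + 2) = n * (d' + 1) + n := by ring
        omega), Finset.card_range]


lemma bridgeA (d' k : ℕ) (x y : ℤ) :
    (0 ≤ y ∧ ((d' : ℤ) + 2) * y ≤ ((d' : ℤ) + 1) * x
        ∧ x + ((d' : ℤ) + 2) * y ≤ (k : ℤ) * ((d' : ℤ) + 2))
      ↔ ∃ q : ℕ × ℕ, q ∈ natA d' k ∧ ((q.1 : ℤ), (q.2 : ℤ)) = (x, y) := by
  constructor
  · rintro ⟨h1, h2, h3⟩
    have hd2 : (0:ℤ) < (d' : ℤ) + 2 := by positivity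
    have hx0 : 0 ≤ x := by nlinarith
    lift x to ℕ using hx0 with a
    lift y to ℕ using h1 with b
    have hk0 : (0:ℤ) ≤ (k:ℤ) := Int.natCast_nonneg k
    have hbk : (b : ℤ) ≤ (k : ℤ) := by
      have t1 : ((d':ℤ)+2) * (((d':ℤ)+2) * b) ≤ ((d':ℤ)+2) * (((d':ℤ)+2) * k) := by
        nlinarith [mul_le_mul_of_nonneg_left h3 (show (0:ℤ) ≤ (d':ℤ)+1 by positivity),
          mul_nonneg (le_of_lt hd2) hk0]
      have t2 := le_of_mul_le_mul_left t1 hd2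
      exact le_of_mul_le_mul_left t2 hd2
    refine ⟨(a, b), ?_, rfl⟩
    rw [natA, Finset.mem_filter]
    simp only [natA, predA, Finset.mem_filter, Finset.mem_product, Finset.mem_range,
      Nat.lt_succ_iff]
    have n2 : (d' + 2) * b ≤ (d' + 1) * a := by exact_mod_cast h2
    have n3 : a + (d' + 2) * b ≤ k * (d' + 2) := by exact_mod_cast h3
    have nbk : b ≤ k := by exact_mod_cast hbk
    exact ⟨⟨le_trans (Nat.le_add_right _ _) n3, nbk⟩, n2, n3⟩
  · rintro ⟨⟨a, b⟩, hmem, heq⟩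
    rw [Prod.mk.injEq] at heq
    obtain ⟨h1, h2⟩ := heq
    subst h1; subst h2
    rw [natA, Finset.mem_filter] at hmem
    simp only [natA, predA, Finset.mem_filter, Finset.mem_product, Finset.mem_range,
      Nat.lt_succ_iff] at hmem
    refine ⟨by positivity, by exact_mod_cast hmem.2.1, by exact_mod_cast hmem.2.2⟩

lemma bridgeB (d' k : ℕ) (x y : ℤ) :
    (0 ≤ y ∧ (k : ℤ) ≤ x ∧ x + ((d' : ℤ) + 1) * y ≤ (k : ℤ) * ((d' : ℤ) + 2))
      ↔ ∃ q : ℕ × ℕ, q ∈ natB d' k ∧ ((q.1 : ℤ), (q.2 : ℤ)) = (x, y) := by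
  constructor
  · rintro ⟨h1, h2, h3⟩
    have hd1 : (0:ℤ) < (d' : ℤ) + 1 := by positivity
    have hx0 : 0 ≤ x := le_trans (Int.natCast_nonneg k) h2
    lift x to ℕ using hx0 with a
    lift y to ℕ using h1 with b
    have hbk : (b : ℤ) ≤ (k : ℤ) := by
      have t1 : ((d':ℤ)+1) * b ≤ ((d':ℤ)+1) * k := by nlinarith
      exact le_of_mul_le_mul_left t1 hd1
    refine ⟨(a, b), ?_, rfl⟩
    rw [natB, Finset.mem_filter]
    simp only [natB, predB, Finset.mem_filter, Finset.mem_product, Finset.mem_range,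
      Finset.mem_Ico, Nat.lt_succ_iff]
    have n2 : k ≤ a := by exact_mod_cast h2
    have n3 : a + (d' + 1) * b ≤ k * (d' + 2) := by exact_mod_cast h3
    have nbk : b ≤ k := by exact_mod_cast hbk
    exact ⟨⟨⟨n2, le_trans (Nat.le_add_right _ _) n3⟩, nbk⟩, n3⟩
  · rintro ⟨⟨a, b⟩, hmem, heq⟩
    rw [Prod.mk.injEq] at heq
    obtain ⟨h1, h2⟩ := heq
    subst h1; subst h2
    rw [natB, Finset.mem_filter] at hmem
    simp only [natB, predB, Finset.mem_filter, Finset.mem_product, Finset.mem_range,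
      Finset.mem_Ico, Nat.lt_succ_iff] at hmem
    refine ⟨by positivity, by exact_mod_cast hmem.1.1.1, by exact_mod_cast hmem.2⟩


end Counting

theorem stmt0 (D : ℤ) (hD : 2 ≤ D) (k : ℕ) (hk : 1 ≤ k) :
    latticeCount2 ((k : ℝ) • TriT D) = latticeCount2 ((k : ℝ) • TriT' D) := by
  obtain ⟨d', rfl⟩ : ∃ d' : ℕ, D = (d' : ℤ) + 2 := ⟨(D - 2).toNat, by omega⟩
  have he : (2:ℝ) ≤ (((d' : ℤ) + 2 : ℤ) : ℝ) := by push_cast; linarith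
  have hkr : (1:ℝ) ≤ (k : ℝ) := by exact_mod_cast hk
  have hinj : Function.Injective (fun q : ℕ × ℕ => ((q.1 : ℤ), (q.2 : ℤ))) := by
    rintro ⟨a, b⟩ ⟨c, d⟩ h
    simp only [Prod.mk.injEq] at h
    exact Prod.ext (by exact_mod_cast h.1) (by exact_mod_cast h.2)
  have hAset : {p : ℤ × ℤ | ((p.1 : ℝ), (p.2 : ℝ)) ∈ (k : ℝ) • TriT ((d' : ℤ) + 2)}
      = (fun q : ℕ × ℕ => ((q.1 : ℤ), (q.2 : ℤ))) '' ↑(natA d' k) := by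
    ext ⟨x, y⟩
    simp only [Set.mem_setOf_eq, Set.mem_image, Finset.mem_coe]
    rw [TriT, memT_iff _ _ he hkr, ← bridgeA d' k x y]
    constructor
    · rintro ⟨h1, h2, h3⟩
      refine ⟨by exact_mod_cast h1, ?_, ?_⟩
      · have h2' : ((d' : ℝ) + 2) * (y : ℝ) ≤ ((d' : ℝ) + 1) * (x : ℝ) := by
          push_cast at h2; linarith
        exact_mod_cast h2'
      · have h3' : (x : ℝ) + ((d' : ℝ) + 2) * (y : ℝ) ≤ (k : ℝ) * ((d' : ℝ) + 2) := by
          push_cast at h3; linarith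
        exact_mod_cast h3'
    · rintro ⟨h1, h2, h3⟩
      refine ⟨by exact_mod_cast h1, ?_, ?_⟩
      · have h2' : (((d' : ℤ) + 2 : ℤ) : ℝ) * (y : ℝ) ≤ (((d' : ℤ) + 1 : ℤ) : ℝ) * (x : ℝ) := by
          exact_mod_cast h2
        push_cast at h2' ⊢
        linarith
      · have h3' : (x : ℝ) + (((d' : ℤ) + 2 : ℤ) : ℝ) * (y : ℝ)
            ≤ ((k : ℤ) : ℝ) * (((d' : ℤ) + 2 : ℤ) : ℝ) := by exact_mod_cast h3
        push_cast at h3' ⊢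
        linarith
  have hBset : {p : ℤ × ℤ | ((p.1 : ℝ), (p.2 : ℝ)) ∈ (k : ℝ) • TriT' ((d' : ℤ) + 2)}
      = (fun q : ℕ × ℕ => ((q.1 : ℤ), (q.2 : ℤ))) '' ↑(natB d' k) := by
    ext ⟨x, y⟩
    simp only [Set.mem_setOf_eq, Set.mem_image, Finset.mem_coe]
    rw [TriT', memT'_iff _ _ he hkr, ← bridgeB d' k x y]
    constructor
    · rintro ⟨h1, h2, h3⟩
      refine ⟨by exact_mod_cast h1, by exact_mod_cast h2, ?_⟩
      have h3' : (x : ℝ) + ((d' : ℝ) + 1) * (y : ℝ) ≤ (k : ℝ) * ((d' : ℝ) + 2) := by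
        push_cast at h3; linarith
      exact_mod_cast h3'
    · rintro ⟨h1, h2, h3⟩
      refine ⟨by exact_mod_cast h1, by exact_mod_cast h2, ?_⟩
      have h3' : (x : ℝ) + ((((d' : ℤ) + 2 : ℤ) : ℝ) - 1) * (y : ℝ)
          ≤ ((k : ℤ) : ℝ) * (((d' : ℤ) + 2 : ℤ) : ℝ) := by
        have : (((d' : ℤ) + 2 : ℤ) : ℝ) - 1 = (((d' : ℤ) + 1 : ℤ) : ℝ) := by push_cast; ring
        rw [this]
        exact_mod_cast h3
      push_cast at h3' ⊢
      linarith
  rw [latticeCount2, latticeCount2, hAset, hBset,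
    Set.ncard_image_of_injective _ hinj, Set.ncard_image_of_injective _ hinj,
    Set.ncard_coe_finset, Set.ncard_coe_finset, cardA, cardB, key_id]
end

section
/- The affine unimodular map U(x) = [[D-1, -D], [-1, 1]]·x + (1,1)ᵗ has determinant -1 in its linear part (so the linear part is in GL₂(ℤ)), and it maps the half-open triangle L = conv{(0,0),(1,0),(1,(D-1)/D)} \ [(1,0),(1,(D-1)/D)] bijectively onto T' \ R, where R = conv{(1,0),(D,0),(1,(D-1)/D)} and T' = conv{(1,0),(1,1),(D,0)}. -/
section AuxLemmas
lemma mem_tri_s1 {a b c p : ℝ × ℝ} :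
    p ∈ convexHull ℝ ({a, b, c} : Set (ℝ × ℝ)) ↔
    ∃ α β γ : ℝ, 0 ≤ α ∧ 0 ≤ β ∧ 0 ≤ γ ∧ α + β + γ = 1 ∧ α • a + β • b + γ • c = p := by
  constructor
  · intro hp
    rw [show ({a,b,c} : Set (ℝ×ℝ)) = insert a {b,c} from rfl,
        convexHull_insert ⟨b, by simp⟩, mem_convexJoin] at hp
    obtain ⟨a', ha', x, hx, hpx⟩ := hp
    rw [Set.mem_singleton_iff] at ha'; subst ha'
    rw [convexHull_pair] at hx
    obtain ⟨u, v, hu, hv, huv, hx⟩ := hx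
    obtain ⟨s, t, hs, ht, hst, hp⟩ := hpx
    refine ⟨s, t*u, t*v, hs, by positivity, by positivity, by nlinarith, ?_⟩
    rw [← hp, ← hx]
    simp only [smul_add, smul_smul]
    ring_nf
  · rintro ⟨α, β, γ, hα, hβ, hγ, hsum, rfl⟩
    by_cases h : β + γ = 0
    · have hβ0 : β = 0 := by linarith
      have hγ0 : γ = 0 := by linarith
      have hα1 : α = 1 := by linarith
      simp only [hβ0, hγ0, hα1, one_smul, zero_smul, add_zero]
      exact subset_convexHull ℝ _ (by simp)
    · have ht : 0 < β + γ := lt_of_le_of_ne (by linarith) (Ne.symm h)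
      rw [show ({a,b,c} : Set (ℝ×ℝ)) = insert a {b,c} from rfl,
          convexHull_insert ⟨b, by simp⟩, mem_convexJoin]
      refine ⟨a, rfl, (β/(β+γ)) • b + (γ/(β+γ)) • c, ?_, ?_⟩
      · rw [convexHull_pair]
        exact ⟨β/(β+γ), γ/(β+γ), by positivity, by positivity, by field_simp, rfl⟩
      · refine ⟨α, β+γ, hα, le_of_lt ht, by linarith, ?_⟩
        rw [smul_add, smul_smul, smul_smul, mul_div_cancel₀ _ h, mul_div_cancel₀ _ h, add_assoc]

lemma memT' {d : ℝ} (hd : 2 ≤ d) {p : ℝ × ℝ} :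
    p ∈ convexHull ℝ ({(1, 0), (1, 1), (d, 0)} : Set (ℝ × ℝ)) ↔
    1 ≤ p.1 ∧ 0 ≤ p.2 ∧ p.1 + (d - 1) * p.2 ≤ d := by
  have hd1 : (0:ℝ) < d - 1 := by linarith
  rw [mem_tri_s1]
  constructor
  · rintro ⟨α, β, γ, hα, hβ, hγ, hsum, heq⟩
    have h1 : α * 1 + β * 1 + γ * d = p.1 := by
      have := congrArg Prod.fst heq; simpa using this
    have h2 : α * 0 + β * 1 + γ * 0 = p.2 := by
      have := congrArg Prod.snd heq; simpa using this
    refine ⟨by nlinarith, by nlinarith, by nlinarith⟩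
  · rintro ⟨h1, h2, h3⟩
    refine ⟨1 - p.2 - (p.1 - 1)/(d - 1), p.2, (p.1 - 1)/(d - 1), ?_, h2,
      div_nonneg (by linarith) hd1.le, by ring, ?_⟩
    · have : (p.1 - 1)/(d - 1) ≤ 1 - p.2 := by
        rw [div_le_iff₀ hd1]; nlinarith
      linarith
    · simp only [Prod.ext_iff, Prod.smul_mk, smul_eq_mul, Prod.mk_add_mk]
      constructor
      · field_simp
        try ring
      · ring

lemma memR {d : ℝ} (hd : 2 ≤ d) {p : ℝ × ℝ} :
    p ∈ convexHull ℝ ({(1, 0), (d, 0), (1, (d - 1)/d)} : Set (ℝ × ℝ)) ↔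
    1 ≤ p.1 ∧ 0 ≤ p.2 ∧ p.1 + d * p.2 ≤ d := by
  have hd1 : (0:ℝ) < d - 1 := by linarith
  have hd0 : (0:ℝ) < d := by linarith
  rw [mem_tri_s1]
  constructor
  · rintro ⟨α, β, γ, hα, hβ, hγ, hsum, heq⟩
    have h1 : α * 1 + β * d + γ * 1 = p.1 := by
      have := congrArg Prod.fst heq; simpa using this
    have h2 : α * 0 + β * 0 + γ * ((d - 1)/d) = p.2 := by
      have := congrArg Prod.snd heq; simpa using this
    have h2' : γ * (d - 1) = d * p.2 := by
      field_simp at h2; linarith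
    refine ⟨by nlinarith, by nlinarith, by nlinarith⟩
  · rintro ⟨h1, h2, h3⟩
    refine ⟨1 - (p.1 - 1)/(d - 1) - d * p.2/(d - 1), (p.1 - 1)/(d - 1), d * p.2/(d - 1),
      ?_, div_nonneg (by linarith) hd1.le, div_nonneg (by positivity) hd1.le, by ring, ?_⟩
    · have : (p.1 - 1)/(d - 1) + d * p.2/(d - 1) ≤ 1 := by
        rw [← add_div, div_le_one hd1]; linarith
      linarith
    · simp only [Prod.ext_iff, Prod.smul_mk, smul_eq_mul, Prod.mk_add_mk]
      constructor
      · field_simp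
        try ring
      · field_simp
        try ring

lemma memLtri {d : ℝ} (hd : 2 ≤ d) {p : ℝ × ℝ} :
    p ∈ convexHull ℝ ({(0, 0), (1, 0), (1, (d - 1)/d)} : Set (ℝ × ℝ)) ↔
    0 ≤ p.2 ∧ d * p.2 ≤ (d - 1) * p.1 ∧ p.1 ≤ 1 := by
  have hd1 : (0:ℝ) < d - 1 := by linarith
  have hd0 : (0:ℝ) < d := by linarith
  rw [mem_tri_s1]
  constructor
  · rintro ⟨α, β, γ, hα, hβ, hγ, hsum, heq⟩
    have h1 : α * 0 + β * 1 + γ * 1 = p.1 := by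
      have := congrArg Prod.fst heq; simpa using this
    have h2 : α * 0 + β * 0 + γ * ((d - 1)/d) = p.2 := by
      have := congrArg Prod.snd heq; simpa using this
    have h2' : γ * (d - 1) = d * p.2 := by
      field_simp at h2; linarith
    refine ⟨by nlinarith, by nlinarith, by nlinarith⟩
  · rintro ⟨h1, h2, h3⟩
    refine ⟨1 - p.1, p.1 - d * p.2/(d - 1), d * p.2/(d - 1),
      by linarith, ?_, div_nonneg (by positivity) hd1.le, by ring, ?_⟩
    · have : d * p.2/(d - 1) ≤ p.1 := by
        rw [div_le_iff₀ hd1]; nlinarith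
      linarith
    · simp only [Prod.ext_iff, Prod.smul_mk, smul_eq_mul, Prod.mk_add_mk]
      constructor
      · ring
      · field_simp
        try ring

lemma memSeg {d : ℝ} (hd : 2 ≤ d) {p : ℝ × ℝ} :
    p ∈ segment ℝ ((1:ℝ), (0:ℝ)) (1, (d - 1)/d) ↔
    p.1 = 1 ∧ 0 ≤ p.2 ∧ d * p.2 ≤ d - 1 := by
  have hd1 : (0:ℝ) < d - 1 := by linarith
  have hd0 : (0:ℝ) < d := by linarith
  constructor
  · rintro ⟨u, v, hu, hv, huv, heq⟩
    have h1 : u * 1 + v * 1 = p.1 := by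
      have := congrArg Prod.fst heq; simpa using this
    have h2 : u * 0 + v * ((d - 1)/d) = p.2 := by
      have := congrArg Prod.snd heq; simpa using this
    have h2' : v * (d - 1) = d * p.2 := by
      field_simp at h2; linarith
    refine ⟨by linarith, by nlinarith, by nlinarith⟩
  · rintro ⟨h1, h2, h3⟩
    refine ⟨1 - d * p.2/(d - 1), d * p.2/(d - 1), ?_, div_nonneg (by positivity) hd1.le,
      by ring, ?_⟩
    · have : d * p.2/(d - 1) ≤ 1 := by rw [div_le_one hd1]; linarith
      linarith
    · simp only [Prod.ext_iff, Prod.smul_mk, smul_eq_mul, Prod.mk_add_mk]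
      constructor
      · linarith
      · field_simp
        try ring

end AuxLemmas



open Pointwise

/-- The affine map `U(x) = [[D-1,-D],[-1,1]] x + (1,1)`. -/
noncomputable def Umap (D : ℤ) (x : ℝ × ℝ) : ℝ × ℝ :=
  (((D : ℝ) - 1) * x.1 - (D : ℝ) * x.2 + 1, -x.1 + x.2 + 1)

/-- The half-open triangle `L`: `conv{(0,0),(1,0),(1,(D-1)/D)}` minus the closed
segment from `(1,0)` to `(1,(D-1)/D)`. -/
noncomputable def Lset (D : ℤ) : Set (ℝ × ℝ) :=
  convexHull ℝ {(0, 0), (1, 0), (1, ((D : ℝ) - 1) / (D : ℝ))} \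
    segment ℝ (1, 0) (1, ((D : ℝ) - 1) / (D : ℝ))

/-- The closed triangle `R = conv{(1,0),(D,0),(1,(D-1)/D)}`. -/
noncomputable def Rset (D : ℤ) : Set (ℝ × ℝ) :=
  convexHull ℝ {(1, 0), ((D : ℝ), 0), (1, ((D : ℝ) - 1) / (D : ℝ))}

lemma memLset {D : ℤ} (hD : 2 ≤ D) {p : ℝ × ℝ} :
    p ∈ Lset D ↔ 0 ≤ p.2 ∧ (D:ℝ) * p.2 ≤ ((D:ℝ) - 1) * p.1 ∧ p.1 < 1 := by
  have hd : (2:ℝ) ≤ (D:ℝ) := by exact_mod_cast hD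
  rw [Lset, Set.mem_diff, memLtri hd, memSeg hd]
  constructor
  · rintro ⟨⟨h1, h2, h3⟩, h4⟩
    refine ⟨h1, h2, lt_of_le_of_ne h3 fun he => h4 ⟨he, h1, by nlinarith⟩⟩
  · rintro ⟨h1, h2, h3⟩
    exact ⟨⟨h1, h2, h3.le⟩, fun ⟨he, _, _⟩ => absurd he (ne_of_lt h3)⟩

theorem stmt1 (D : ℤ) (hD : 2 ≤ D) :
    Matrix.det !![D - 1, -D; -1, 1] = -1 ∧
    Set.BijOn (Umap D) (Lset D) (TriT' D \ Rset D) := by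
  have hd : (2:ℝ) ≤ (D:ℝ) := by exact_mod_cast hD
  constructor
  · rw [Matrix.det_fin_two_of]; ring
  · set d : ℝ := (D:ℝ) with hdd
    have memTR : ∀ p : ℝ × ℝ, p ∈ TriT' D \ Rset D ↔
        1 ≤ p.1 ∧ 0 ≤ p.2 ∧ p.1 + (d - 1) * p.2 ≤ d ∧ d < p.1 + d * p.2 := by
      intro p
      rw [Set.mem_diff, TriT', Rset, memT' hd, memR hd]
      constructor
      · rintro ⟨⟨h1, h2, h3⟩, h4⟩
        refine ⟨h1, h2, h3, ?_⟩
        by_contra h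
        exact h4 ⟨h1, h2, by linarith⟩
      · rintro ⟨h1, h2, h3, h4⟩
        exact ⟨⟨h1, h2, h3⟩, fun ⟨_, _, h⟩ => absurd h (by linarith)⟩
    refine Set.InvOn.bijOn (f' := fun p : ℝ × ℝ => (d + 1 - p.1 - d * p.2, d - p.1 - (d - 1) * p.2))
      ⟨?_, ?_⟩ ?_ ?_
    · intro p _
      simp only [Umap]
      exact Prod.ext (by ring) (by ring)
    · intro p _
      simp only [Umap]
      exact Prod.ext (by ring) (by ring)
    · intro p hp
      rw [memLset hD] at hp
      obtain ⟨h1, h2, h3⟩ := hp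
      rw [memTR]
      simp only [Umap]
      refine ⟨by nlinarith, by nlinarith, by nlinarith, by nlinarith⟩
    · intro p hp
      rw [memTR] at hp
      obtain ⟨h1, h2, h3, h4⟩ := hp
      rw [memLset hD]
      dsimp only
      refine ⟨by nlinarith, by nlinarith, by nlinarith⟩
end

section
/- The unimodular linear map with matrix [[1,0,0],[1,0,-1],[-1,1,2]] (which has determinant 1) maps the half-space {x ∈ ℝ³ : -x₁ + x₂ + x₃ ≥ 0} intersected with the pyramid P = conv{(0,0,0),(1,0,0),(1,1,0),(0,1,0),(1/2,0,1/2)} together with the complementary piece so that the resulting union is an integral polytope; consequently, for every integer k ≥ 1 the lattice point count |kP ∩ ℤ³| is a polynomial function of k. -/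
open Pointwise

/-- Number of integer lattice points of `ℤ³` lying in a subset of `ℝ³`. -/
noncomputable def latticeCount3 (S : Set (ℝ × ℝ × ℝ)) : ℕ :=
  {p : ℤ × ℤ × ℤ | ((p.1 : ℝ), (p.2.1 : ℝ), (p.2.2 : ℝ)) ∈ S}.ncard

/-- A subset of `ℝ³` is an integral polytope if it is the convex hull of
finitely many points of `ℤ³`. -/
def IsIntegralPolytope3 (S : Set (ℝ × ℝ × ℝ)) : Prop :=
  ∃ V : Set (ℤ × ℤ × ℤ), V.Finite ∧
    S = convexHull ℝ ((fun p : ℤ × ℤ × ℤ => ((p.1 : ℝ), (p.2.1 : ℝ), (p.2.2 : ℝ))) '' V)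

/-- Stanley's pyramid `P = conv{(0,0,0),(1,0,0),(1,1,0),(0,1,0),(1/2,0,1/2)}`. -/
noncomputable def Pyr : Set (ℝ × ℝ × ℝ) :=
  convexHull ℝ {(0, 0, 0), (1, 0, 0), (1, 1, 0), (0, 1, 0), (1 / 2, 0, 1 / 2)}

/-- The linear map with matrix `[[1,0,0],[1,0,-1],[-1,1,2]]`. -/
def Upyr (x : ℝ × ℝ × ℝ) : ℝ × ℝ × ℝ :=
  (x.1, x.1 - x.2.2, -x.1 + x.2.1 + 2 * x.2.2)



lemma mem_hull5 {A B C D E p : ℝ×ℝ×ℝ} {a b c d e : ℝ} (ha : 0 ≤ a) (hb : 0 ≤ b)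
    (hc : 0 ≤ c) (hd : 0 ≤ d) (he : 0 ≤ e) (hs : a+b+c+d+e = 1)
    (hp : a•A + b•B + c•C + d•D + e•E = p) : p ∈ convexHull ℝ {A,B,C,D,E} := by
  have h := (convex_convexHull ℝ ({A,B,C,D,E} : Set (ℝ×ℝ×ℝ))).sum_mem
    (t := (Finset.univ : Finset (Fin 5))) (w := ![a,b,c,d,e]) (z := ![A,B,C,D,E])
    (by intro i _; fin_cases i <;> simpa)
    (by simp [Fin.sum_univ_five, hs])
    (by intro i _; fin_cases i <;>
      exact subset_convexHull ℝ _ (by simp))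
  simpa [Fin.sum_univ_five, hp] using h

def HP : Set (ℝ×ℝ×ℝ) :=
  {p | 0 ≤ p.2.2 ∧ 0 ≤ p.2.1 ∧ p.2.2 ≤ p.1 ∧ p.1 + p.2.2 ≤ 1 ∧ p.2.1 + 2*p.2.2 ≤ 1}

lemma convex_HP : Convex ℝ HP := by
  intro p hp q hq a b ha hb hab
  obtain ⟨h1,h2,h3,h4,h5⟩ := hp
  obtain ⟨g1,g2,g3,g4,g5⟩ := hq
  refine ⟨?_,?_,?_,?_,?_⟩ <;>
    simp only [Prod.fst_add, Prod.snd_add, Prod.smul_fst, Prod.smul_snd, smul_eq_mul] <;>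
    nlinarith

lemma Pyr_eq : Pyr = HP := by
  apply le_antisymm
  · apply convexHull_min _ convex_HP
    intro p hp
    simp only [Set.mem_insert_iff, Set.mem_singleton_iff] at hp
    rcases hp with h|h|h|h|h <;> subst h <;>
      refine ⟨by norm_num, by norm_num, by norm_num, by norm_num, by norm_num⟩
  · rintro ⟨x,y,z⟩ ⟨h1,h2,h3,h4,h5⟩
    simp only at h1 h2 h3 h4 h5
    by_cases hz : z = 1/2
    · have hx : x = 1/2 := by linarith
      have hy : y = 0 := by linarith
      subst hz hx hy
      exact subset_convexHull ℝ _ (by simp)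
    · have hs : 0 < 1 - 2*z := by
        rcases lt_or_eq_of_le (by linarith : 2*z ≤ 1) with h|h
        · linarith
        · exact absurd (by linarith) hz
      set s := 1 - 2*z with hsdef
      set u := x - z with hu
      set v := y with hv
      have hu0 : (0:ℝ) ≤ u := by simp [hu]; linarith
      have hus : u ≤ s := by simp [hu, hsdef]; linarith
      have hv0 : (0:ℝ) ≤ v := h2
      have hvs : v ≤ s := by simp [hsdef]; linarith
      refine mem_hull5 (a := (s-u)*(s-v)/s) (b := u*(s-v)/s) (c := u*v/s)
        (d := (s-u)*v/s) (e := 2*z) ?_ ?_ ?_ ?_ ?_ ?_ ?_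
      · have : 0 ≤ (s-u)*(s-v) := mul_nonneg (by linarith) (by linarith)
        positivity
      · have : 0 ≤ u*(s-v) := mul_nonneg hu0 (by linarith)
        positivity
      · positivity
      · have : 0 ≤ (s-u)*v := mul_nonneg (by linarith) hv0
        positivity
      · linarith
      · field_simp
        rw [hsdef]; ring
      · simp only [Prod.mk.injEq, Prod.smul_mk, Prod.mk_add_mk, smul_eq_mul]
        refine ⟨?_, ?_, ?_⟩ <;> field_simp <;> simp -failIfUnchanged only [hu, hsdef, hv] <;> ring_nf

def Ulin : (ℝ×ℝ×ℝ) →ₗ[ℝ] (ℝ×ℝ×ℝ) where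
  toFun := Upyr
  map_add' p q := by unfold Upyr; ext <;> dsimp <;> ring
  map_smul' a p := by unfold Upyr; ext <;> dsimp <;> ring

lemma mem_hull4 {A B C D p : ℝ×ℝ×ℝ} {a b c d : ℝ} (ha : 0 ≤ a) (hb : 0 ≤ b)
    (hc : 0 ≤ c) (hd : 0 ≤ d) (hs : a+b+c+d = 1)
    (hp : a•A + b•B + c•C + d•D = p) : p ∈ convexHull ℝ {A,B,C,D} := by
  have h := (convex_convexHull ℝ ({A,B,C,D} : Set (ℝ×ℝ×ℝ))).sum_mem
    (t := (Finset.univ : Finset (Fin 4))) (w := ![a,b,c,d]) (z := ![A,B,C,D])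
    (by intro i _; fin_cases i <;> simpa)
    (by simp [Fin.sum_univ_four, hs])
    (by intro i _; fin_cases i <;>
      exact subset_convexHull ℝ _ (by simp))
  simpa [Fin.sum_univ_four, hp] using h

lemma convex_hsPlus : Convex ℝ {x : ℝ × ℝ × ℝ | 0 ≤ -x.1 + x.2.1 + x.2.2} := by
  intro p hp q hq a b ha hb hab
  simp only [Set.mem_setOf_eq, Prod.fst_add, Prod.snd_add, Prod.smul_fst, Prod.smul_snd,
    smul_eq_mul] at *
  nlinarith

lemma convex_hsMinus : Convex ℝ {x : ℝ × ℝ × ℝ | -x.1 + x.2.1 + x.2.2 ≤ 0} := by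
  intro p hp q hq a b ha hb hab
  simp only [Set.mem_setOf_eq, Prod.fst_add, Prod.snd_add, Prod.smul_fst, Prod.smul_snd,
    smul_eq_mul] at *
  nlinarith

lemma PyrPlus : Pyr ∩ {x : ℝ × ℝ × ℝ | 0 ≤ -x.1 + x.2.1 + x.2.2} =
    convexHull ℝ {((0:ℝ),(0:ℝ),(0:ℝ)), (1,1,0), (0,1,0), (1/2,0,1/2)} := by
  apply le_antisymm
  · rintro ⟨x,y,z⟩ ⟨hp, hh⟩
    rw [Pyr_eq] at hp
    obtain ⟨h1,h2,h3,h4,h5⟩ := hp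
    simp only at h1 h2 h3 h4 h5
    simp only [Set.mem_setOf_eq] at hh
    refine mem_hull4 (a := 1-y-2*z) (b := x-z) (c := y-x+z) (d := 2*z)
      (by linarith) (by linarith) (by linarith) (by linarith) (by ring)
      (by simp only [Prod.smul_mk, Prod.mk_add_mk, smul_eq_mul, Prod.mk.injEq]
          refine ⟨by ring, by ring, by ring⟩)
  · apply convexHull_min _ ((convex_convexHull ℝ _).inter convex_hsPlus)
    intro p hp
    simp only [Set.mem_insert_iff, Set.mem_singleton_iff] at hp
    rcases hp with h|h|h|h <;> subst h <;>
      exact ⟨subset_convexHull ℝ _ (by norm_num), by norm_num⟩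

lemma PyrMinus : Pyr ∩ {x : ℝ × ℝ × ℝ | -x.1 + x.2.1 + x.2.2 ≤ 0} =
    convexHull ℝ {((0:ℝ),(0:ℝ),(0:ℝ)), (1,0,0), (1,1,0), (1/2,0,1/2)} := by
  apply le_antisymm
  · rintro ⟨x,y,z⟩ ⟨hp, hh⟩
    rw [Pyr_eq] at hp
    obtain ⟨h1,h2,h3,h4,h5⟩ := hp
    simp only at h1 h2 h3 h4 h5
    simp only [Set.mem_setOf_eq] at hh
    refine mem_hull4 (a := 1-x-z) (b := x-y-z) (c := y) (d := 2*z)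
      (by linarith) (by linarith) (by linarith) (by linarith) (by ring)
      (by simp only [Prod.smul_mk, Prod.mk_add_mk, smul_eq_mul, Prod.mk.injEq]
          refine ⟨by ring, by ring, by ring⟩)
  · apply convexHull_min _ ((convex_convexHull ℝ _).inter convex_hsMinus)
    intro p hp
    simp only [Set.mem_insert_iff, Set.mem_singleton_iff] at hp
    rcases hp with h|h|h|h <;> subst h <;>
      exact ⟨subset_convexHull ℝ _ (by norm_num), by norm_num⟩

lemma convex_HT : Convex ℝ {p : ℝ×ℝ×ℝ | 0 ≤ p.2.1 ∧ p.2.1 ≤ p.1 ∧ 0 ≤ p.2.2 ∧ p.1 + p.2.2 ≤ 1} := by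
  intro p hp q hq a b ha hb hab
  obtain ⟨h1,h2,h3,h4⟩ := hp
  obtain ⟨g1,g2,g3,g4⟩ := hq
  refine ⟨?_,?_,?_,?_⟩ <;>
    simp only [Prod.fst_add, Prod.snd_add, Prod.smul_fst, Prod.smul_snd, smul_eq_mul] <;>
    nlinarith

lemma hullT_sub : convexHull ℝ {((0:ℝ),(0:ℝ),(0:ℝ)), (1,0,0), (1,1,0), (0,0,1)} ⊆
    {p : ℝ×ℝ×ℝ | 0 ≤ p.2.1 ∧ p.2.1 ≤ p.1 ∧ 0 ≤ p.2.2 ∧ p.1 + p.2.2 ≤ 1} := by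
  apply convexHull_min _ convex_HT
  intro p hp
  simp only [Set.mem_insert_iff, Set.mem_singleton_iff] at hp
  rcases hp with h|h|h|h <;> subst h <;> norm_num

lemma union_eq : (Upyr '' (Pyr ∩ {x : ℝ × ℝ × ℝ | 0 ≤ -x.1 + x.2.1 + x.2.2})) ∪
      (Pyr ∩ {x : ℝ × ℝ × ℝ | -x.1 + x.2.1 + x.2.2 ≤ 0}) =
    convexHull ℝ {((0:ℝ),(0:ℝ),(0:ℝ)), (1,0,0), (1,1,0), (0,0,1)} := by
  have himg : Upyr '' (Pyr ∩ {x : ℝ × ℝ × ℝ | 0 ≤ -x.1 + x.2.1 + x.2.2}) =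
      convexHull ℝ {((0:ℝ),(0:ℝ),(0:ℝ)), (1,1,0), (0,0,1), (1/2,0,1/2)} := by
    rw [PyrPlus]
    rw [show Upyr = ⇑Ulin from rfl, Ulin.image_convexHull]
    congr 1
    rw [show ⇑Ulin = Upyr from rfl]
    rw [Set.image_insert_eq, Set.image_insert_eq, Set.image_insert_eq, Set.image_singleton]
    norm_num [Upyr]
  rw [himg, PyrMinus]
  apply le_antisymm
  · have hE : ((1/2:ℝ),(0:ℝ),(1/2:ℝ)) ∈
        convexHull ℝ {((0:ℝ),(0:ℝ),(0:ℝ)), (1,0,0), (1,1,0), (0,0,1)} := by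
      refine mem_hull4 (a := 0) (b := 1/2) (c := 0) (d := 1/2)
        (by norm_num) (by norm_num) (by norm_num) (by norm_num) (by norm_num) ?_
      simp only [Prod.smul_mk, Prod.mk_add_mk, smul_eq_mul]
      norm_num
    apply Set.union_subset <;>
    · apply convexHull_min _ (convex_convexHull ℝ _)
      intro p hp
      simp only [Set.mem_insert_iff, Set.mem_singleton_iff] at hp
      rcases hp with h|h|h|h <;> subst h <;>
        first
        | exact hE
        | exact subset_convexHull ℝ _ (by norm_num)
  · rintro ⟨x,y,z⟩ hp
    obtain ⟨h1,h2,h3,h4⟩ := hullT_sub hp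
    simp only at h1 h2 h3 h4
    by_cases hcase : 0 ≤ -x + y + z
    · left
      refine mem_hull4 (a := 1-x-z) (b := y) (c := z-x+y) (d := 2*(x-y))
        (by linarith) (by linarith) (by linarith) (by linarith) (by ring)
        (by simp only [Prod.smul_mk, Prod.mk_add_mk, smul_eq_mul, Prod.mk.injEq]
            refine ⟨by ring, by ring, by ring⟩)
    · right
      refine mem_hull4 (a := 1-x-z) (b := x-y-z) (c := y) (d := 2*z)
        (by linarith) (by linarith) (by linarith) (by linarith) (by ring)
        (by simp only [Prod.smul_mk, Prod.mk_add_mk, smul_eq_mul, Prod.mk.injEq]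
            refine ⟨by ring, by ring, by ring⟩)

noncomputable def Tf (k : ℕ) : Finset (ℤ×ℤ×ℤ) :=
  ((Finset.Icc (0:ℤ) k) ×ˢ (Finset.Icc (0:ℤ) k) ×ˢ (Finset.Icc (0:ℤ) k)).filter
    (fun p => p.2.2 ≤ p.1 ∧ p.1 + p.2.2 ≤ k ∧ p.2.1 + 2*p.2.2 ≤ k)

lemma memTf {k : ℕ} {p : ℤ×ℤ×ℤ} : p ∈ Tf k ↔
    0 ≤ p.2.2 ∧ 0 ≤ p.2.1 ∧ p.2.2 ≤ p.1 ∧ p.1 + p.2.2 ≤ k ∧ p.2.1 + 2*p.2.2 ≤ k := by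
  simp only [Tf, Finset.mem_filter, Finset.mem_product, Finset.mem_Icc]
  omega

lemma lattice_eq (k : ℕ) (hk : 1 ≤ k) :
    {p : ℤ × ℤ × ℤ | ((p.1 : ℝ), (p.2.1 : ℝ), (p.2.2 : ℝ)) ∈ (k:ℝ) • Pyr} = ↑(Tf k) := by
  have hk0 : (0:ℝ) < k := by exact_mod_cast hk
  have hkne : (k:ℝ) ≠ 0 := ne_of_gt hk0
  ext ⟨x,y,z⟩
  simp only [Set.mem_setOf_eq, Finset.coe_filter, Set.mem_setOf_eq, Finset.mem_coe, memTf]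
  rw [Set.mem_smul_set_iff_inv_smul_mem₀ hkne, Pyr_eq]
  simp only [Prod.smul_mk, smul_eq_mul, HP, Set.mem_setOf_eq]
  simp only [inv_mul_eq_div]
  have key : ∀ a b : ℤ, ((a:ℝ)/k ≤ (b:ℝ)/k) ↔ a ≤ b := by
    intro a b
    rw [div_le_div_iff_of_pos_right hk0]
    exact_mod_cast Iff.rfl
  constructor
  · rintro ⟨h1,h2,h3,h4,h5⟩
    refine ⟨?_,?_,?_,?_,?_⟩
    · exact_mod_cast (key 0 z).mp (by simpa using h1)
    · exact_mod_cast (key 0 y).mp (by simpa using h2)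
    · exact (key z x).mp h3
    · rw [← add_div, div_le_one hk0] at h4
      exact_mod_cast h4
    · have e : (y:ℝ)/k + 2*((z:ℝ)/k) = ((y:ℝ)+2*(z:ℝ))/k := by ring
      rw [e, div_le_one hk0] at h5
      exact_mod_cast h5
  · rintro ⟨h1,h2,h3,h4,h5⟩
    have c1 : (0:ℝ) ≤ (z:ℝ) := by exact_mod_cast h1
    have c2 : (0:ℝ) ≤ (y:ℝ) := by exact_mod_cast h2
    have c3 : (z:ℝ) ≤ (x:ℝ) := by exact_mod_cast h3
    have c4 : (x:ℝ) + z ≤ (k:ℝ) := by exact_mod_cast h4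
    have c5 : (y:ℝ) + 2*z ≤ (k:ℝ) := by exact_mod_cast h5
    refine ⟨by positivity, by positivity, (key z x).mpr h3, ?_, ?_⟩
    · rw [← add_div, div_le_one hk0]; exact c4
    · have : (y:ℝ)/k + 2*((z:ℝ)/k) = ((y:ℝ)+2*(z:ℝ))/k := by ring
      rw [this, div_le_one hk0]; exact c5

lemma cardTf_step (m : ℕ) : (Tf (m+2)).card = (Tf m).card + (m+3)*(m+3) := by
  classical
  have hsplit := Finset.card_filter_add_card_filter_not
    (s := Tf (m+2)) (p := fun p : ℤ×ℤ×ℤ => p.2.2 = 0)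
  have h1 : ((Tf (m+2)).filter (fun p => p.2.2 = 0)).card = (m+3)*(m+3) := by
    have hb : ((Tf (m+2)).filter (fun p => p.2.2 = 0)).card =
        ((Finset.Icc (0:ℤ) (m+2)) ×ˢ (Finset.Icc (0:ℤ) (m+2))).card := by
      refine Finset.card_bij' (fun p _ => (p.1, p.2.1)) (fun q _ => (q.1, q.2, 0)) ?_ ?_ ?_ ?_
      case refine_1 =>
        rintro ⟨x,y,z⟩ hp
        simp [Finset.mem_filter, memTf] at hp
        simp [Finset.mem_product, Finset.mem_Icc]
        push_cast at hp ⊢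
        omega
      case refine_2 =>
        rintro ⟨x,y⟩ hq
        simp [Finset.mem_product, Finset.mem_Icc] at hq
        simp [Finset.mem_filter, memTf]
        push_cast at hq ⊢
        omega
      case refine_3 =>
        rintro ⟨x,y,z⟩ hp
        simp only [Finset.mem_filter] at hp
        simp [hp.2]
      case refine_4 => rintro ⟨x,y⟩ _ ; rfl
    rw [hb, Finset.card_product, Int.card_Icc]
    have h3 : ((m:ℤ)+2+1-0).toNat = m+3 := by omega
    rw [h3]
  have h2 : ((Tf (m+2)).filter (fun p => ¬ p.2.2 = 0)).card = (Tf m).card := by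
    refine Finset.card_bij' (fun p _ => (p.1 - 1, p.2.1, p.2.2 - 1))
      (fun q _ => (q.1 + 1, q.2.1, q.2.2 + 1)) ?_ ?_ ?_ ?_
    case refine_1 =>
      rintro ⟨x,y,z⟩ hp
      simp [Finset.mem_filter, memTf] at hp
      simp [memTf]
      push_cast at hp ⊢
      omega
    case refine_2 =>
      rintro ⟨x,y,z⟩ hq
      simp [memTf] at hq
      simp [Finset.mem_filter, memTf]
      push_cast at hq ⊢
      omega
    case refine_3 => rintro ⟨x,y,z⟩ _ ; simp
    case refine_4 => rintro ⟨x,y,z⟩ _ ; simp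
  omega

lemma cardTf0 : (Tf 0).card = 1 := by decide
lemma cardTf1 : (Tf 1).card = 4 := by decide

lemma cardTf_pair : ∀ k : ℕ, 6*(Tf k).card = (k+1)*(k+2)*(k+3) ∧
    6*(Tf (k+1)).card = (k+2)*(k+3)*(k+4) := by
  intro k
  induction k with
  | zero => exact ⟨by rw [cardTf0], by rw [cardTf1]⟩
  | succ n ih =>
    refine ⟨ih.2, ?_⟩
    have h := cardTf_step n
    rw [h]
    have : 6 * ((Tf n).card + (n+3)*(n+3)) = 6*(Tf n).card + 6*((n+3)*(n+3)) := by ring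
    rw [this, ih.1]
    ring



theorem stmt4 :
    Matrix.det !![(1 : ℤ), 0, 0; 1, 0, -1; -1, 1, 2] = 1 ∧
    IsIntegralPolytope3
      ((Upyr '' (Pyr ∩ {x : ℝ × ℝ × ℝ | 0 ≤ -x.1 + x.2.1 + x.2.2})) ∪
        (Pyr ∩ {x : ℝ × ℝ × ℝ | -x.1 + x.2.1 + x.2.2 ≤ 0})) ∧
    ∃ a b c d : ℚ, ∀ k : ℕ, 1 ≤ k →
      (latticeCount3 ((k : ℝ) • Pyr) : ℚ) = a * k ^ 3 + b * k ^ 2 + c * k + d := by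
  refine ⟨by simp [Matrix.det_fin_three], ?_, ?_⟩
  · refine ⟨{((0:ℤ),(0:ℤ),(0:ℤ)), (1,0,0), (1,1,0), (0,0,1)}, Set.toFinite _, ?_⟩
    rw [union_eq]
    congr 1
    rw [Set.image_insert_eq, Set.image_insert_eq, Set.image_insert_eq, Set.image_singleton]
    norm_num
  · refine ⟨1/6, 1, 11/6, 1, ?_⟩
    intro k hk
    have h1 : latticeCount3 ((k : ℝ) • Pyr) = (Tf k).card := by
      rw [latticeCount3, lattice_eq k hk, Set.ncard_coe_finset]
    rw [h1]
    have h2 := (cardTf_pair k).1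
    have h3 : (6:ℚ) * ((Tf k).card : ℚ) = ((k:ℚ)+1)*((k:ℚ)+2)*((k:ℚ)+3) := by
      exact_mod_cast h2
    field_simp
    linarith [h3]
end

section
/- For every integer D ≥ 2, there exists a convex rational polygon in ℝ² with denominator exactly D whose lattice-point counting function k ↦ |kP ∩ ℤ²| agrees with a polynomial for all positive integers k. -/
open Pointwise

/-- A subset of `ℝ²` is an integral polytope if it is the convex hull of
finitely many points of `ℤ²`. -/
def IsIntegralPolytope2 (S : Set (ℝ × ℝ)) : Prop :=
  ∃ V : Set (ℤ × ℤ), V.Finite ∧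
    S = convexHull ℝ ((fun p : ℤ × ℤ => ((p.1 : ℝ), (p.2 : ℝ))) '' V)

/-- A subset of `ℝ²` is a rational polygon if it is a two-dimensional convex
hull of finitely many points of `ℚ²`. -/
def IsRationalPolygon (P : Set (ℝ × ℝ)) : Prop :=
  (∃ V : Set (ℚ × ℚ), V.Finite ∧
    P = convexHull ℝ ((fun p : ℚ × ℚ => ((p.1 : ℝ), (p.2 : ℝ))) '' V)) ∧
  ¬ Collinear ℝ P

section Aux


theorem tri (D : ℤ) (hD : 2 ≤ D) (c : ℝ) (hc : 0 < c) :
    c • convexHull ℝ {((0:ℝ),(0:ℝ)), (1, ((D:ℝ)-1)/(D:ℝ)), ((D:ℝ), 0)}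
      = {q : ℝ×ℝ | 0 ≤ q.2 ∧ (D:ℝ)*q.2 ≤ ((D:ℝ)-1)*q.1 ∧ q.1 + (D:ℝ)*q.2 ≤ c*(D:ℝ)} := by
  have hD' : (2:ℝ) ≤ (D:ℝ) := by exact_mod_cast hD
  have hDpos : (0:ℝ) < (D:ℝ) := by linarith
  have hD1 : (0:ℝ) < (D:ℝ) - 1 := by linarith
  have hDne : (D:ℝ) ≠ 0 := ne_of_gt hDpos
  rw [← convexHull_smul]
  have himg : c • ({((0:ℝ),(0:ℝ)), (1, ((D:ℝ)-1)/(D:ℝ)), ((D:ℝ), 0)} : Set (ℝ×ℝ))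
      = {((0:ℝ),(0:ℝ)), (c, c*((D:ℝ)-1)/(D:ℝ)), (c*(D:ℝ), 0)} := by
    simp only [Set.smul_set_insert, Set.smul_set_singleton, Prod.smul_mk, smul_eq_mul]
    norm_num [mul_div_assoc]
  rw [himg]
  apply le_antisymm
  · -- hull ⊆ halfplanes
    apply convexHull_min
    · rintro p hp
      simp only [Set.mem_insert_iff, Set.mem_singleton_iff] at hp
      rcases hp with rfl | rfl | rfl
      · exact ⟨le_refl _, by norm_num, by norm_num; positivity⟩
      · refine ⟨div_nonneg (by nlinarith) (le_of_lt hDpos), ?_, ?_⟩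
        · dsimp only
          have : (D:ℝ)*(c*((D:ℝ)-1)/(D:ℝ)) = ((D:ℝ)-1)*c := by field_simp
          rw [this]
        · dsimp only
          have : c + (D:ℝ)*(c*((D:ℝ)-1)/(D:ℝ)) = c*(D:ℝ) := by field_simp; ring
          rw [this]
      · refine ⟨le_refl _, by dsimp only; nlinarith [mul_pos hc hDpos], by dsimp only; norm_num⟩
    · -- convexity
      intro x hx y hy a b ha hb hab
      obtain ⟨h1, h2, h3⟩ := hx
      obtain ⟨h1', h2', h3'⟩ := hy
      have h4 : a*(c*(D:ℝ)) + b*(c*(D:ℝ)) = c*(D:ℝ) := by rw [← add_mul, hab, one_mul]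
      refine ⟨?_, ?_, ?_⟩ <;>
        simp only [Prod.snd_add, Prod.fst_add, Prod.smul_snd, Prod.smul_fst, smul_eq_mul] <;>
        nlinarith [mul_le_mul_of_nonneg_left h2 ha, mul_le_mul_of_nonneg_left h2' hb,
          mul_le_mul_of_nonneg_left h3 ha, mul_le_mul_of_nonneg_left h3' hb,
          mul_nonneg ha h1, mul_nonneg hb h1', h4]
  · -- halfplanes ⊆ hull
    intro q hq
    obtain ⟨h1, h2, h3⟩ := hq
    have hB2 : q.2 ≤ c*((D:ℝ)-1)/(D:ℝ) := by
      rw [le_div_iff₀ hDpos]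
      nlinarith
    have hset : ({((0:ℝ),(0:ℝ)), (c, c*((D:ℝ)-1)/(D:ℝ)), (c*(D:ℝ), 0)} : Set (ℝ×ℝ))
        = insert (c, c*((D:ℝ)-1)/(D:ℝ)) {((0:ℝ),(0:ℝ)), (c*(D:ℝ), 0)} := by
      rw [Set.insert_comm]
    rw [hset]
    by_cases hq2 : q.2 = c*((D:ℝ)-1)/(D:ℝ)
    · have hq1 : q.1 = c := by
        have e1 : (D:ℝ) * q.2 = c * ((D:ℝ)-1) := by rw [hq2]; field_simp
        have : c ≤ q.1 := by nlinarith
        have : q.1 ≤ c := by nlinarith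
        linarith
      have : q = (c, c*((D:ℝ)-1)/(D:ℝ)) := Prod.ext hq1 hq2
      rw [this]
      exact subset_convexHull ℝ _ (Set.mem_insert _ _)
    · have hq2' : q.2 < c*((D:ℝ)-1)/(D:ℝ) := lt_of_le_of_ne hB2 hq2
      rw [convexHull_insert ⟨_, Set.mem_insert _ _⟩, convexHull_pair]
      set B2 : ℝ := c*((D:ℝ)-1)/(D:ℝ) with hB2def
      have hB2pos : 0 < B2 := by positivity
      set t : ℝ := q.2 / B2 with ht
      have ht0 : 0 ≤ t := div_nonneg h1 (le_of_lt hB2pos)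
      have ht1 : t < 1 := by rw [div_lt_one hB2pos]; exact hq2'
      set z1 : ℝ := (q.1 - t*c)/(1-t) with hz1
      have h1t : 0 < 1 - t := by linarith
      have htc : t * c = (D:ℝ) * q.2 / ((D:ℝ)-1) := by
        rw [ht, hB2def]; field_simp
      have hz1nn : 0 ≤ z1 := by
        apply div_nonneg _ (le_of_lt h1t)
        rw [htc, sub_nonneg, div_le_iff₀ hD1]
        linarith
      have hz1le : z1 ≤ c*(D:ℝ) := by
        rw [hz1, div_le_iff₀ h1t]
        have htcD : t * (c * ((D:ℝ)-1)) = (D:ℝ) * q.2 := by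
          rw [ht, hB2def]; field_simp
        nlinarith
      rw [mem_convexJoin]
      refine ⟨_, Set.mem_singleton _, (z1, 0), ?_, ?_⟩
      · -- z ∈ segment A C
        refine ⟨1 - z1/(c*(D:ℝ)), z1/(c*(D:ℝ)), ?_, ?_, by ring, ?_⟩
        · rw [sub_nonneg, div_le_one (by positivity)]; exact hz1le
        · positivity
        · have : (0:ℝ) < c*(D:ℝ) := by positivity
          simp only [Prod.smul_mk, smul_eq_mul]
          rw [Prod.mk_add_mk]
          refine Prod.ext ?_ (by simp)
          simp only
          field_simp
          ring
      · -- q ∈ segment B z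
        refine ⟨t, 1-t, ht0, le_of_lt h1t, by ring, ?_⟩
        simp only [Prod.smul_mk, smul_eq_mul, Prod.mk_add_mk]
        refine Prod.ext ?_ ?_ <;> simp only
        · rw [hz1]; field_simp; ring
        · rw [ht]; field_simp; ring


theorem ediv_eq_q (D a q : ℤ) (hD : 0 < D) (h1 : q*D ≤ a) (h2 : a < (q+1)*D) : a / D = q := by
  have h : a = (a - q*D) + q*D := by ring
  rw [h, Int.add_mul_ediv_right _ _ (ne_of_gt hD),
    Int.ediv_eq_zero_of_lt (by linarith) (by nlinarith), zero_add]

theorem icc_split (a b c : ℤ) (h1 : a ≤ b) (h2 : b ≤ c) :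
    Finset.Icc a c = Finset.Icc a b ∪ Finset.Ioc b c := by
  ext x
  simp only [Finset.mem_Icc, Finset.mem_union, Finset.mem_Ioc]
  omega

theorem sumlem (D : ℤ) (hD : 2 ≤ D) (k : ℕ) :
    2 * ∑ x ∈ Finset.Icc (0:ℤ) (k*D), (min x (k:ℤ) + (-x)/D + 1)
      = (D-1)*(k:ℤ)^2 + (D+1)*(k:ℤ) + 2 := by
  induction k with
  | zero => simp
  | succ k ih =>
    set K : ℤ := (k : ℤ) with hK
    have hKnn : 0 ≤ K := Int.ofNat_nonneg k
    have hKD : K ≤ K*D := by nlinarith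
    have hcast : ((k+1:ℕ):ℤ) = K + 1 := by push_cast; ring
    have hbound : ((k+1:ℕ):ℤ)*D = K*D + D := by rw [hcast]; ring
    rw [hbound]
    have hsplit := icc_split 0 (K*D) (K*D+D) (by positivity) (by linarith)
    have hdisj : Disjoint (Finset.Icc (0:ℤ) (K*D)) (Finset.Ioc (K*D) (K*D+D)) := by
      rw [Finset.disjoint_left]
      intro a ha hb
      simp only [Finset.mem_Icc] at ha
      simp only [Finset.mem_Ioc] at hb
      omega
    rw [hsplit, Finset.sum_union hdisj]
    -- strip sum = D
    have e0 : ∀ x ∈ Finset.Ioc (K*D) (K*D+D), (min x ((k+1:ℕ):ℤ) + (-x)/D + 1) = 1 := by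
      intro x hx
      simp only [Finset.mem_Ioc] at hx
      rw [hcast]
      have hx1 : min x (K+1) = K + 1 := min_eq_right (by nlinarith)
      have hx2 : (-x)/D = -(K+1) := by
        apply ediv_eq_q D _ _ (by linarith) (by nlinarith) (by nlinarith)
      rw [hx1, hx2]
      ring
    have hstrip : ∑ x ∈ Finset.Ioc (K*D) (K*D+D), (min x ((k+1:ℕ):ℤ) + (-x)/D + 1) = D := by
      rw [Finset.sum_congr rfl e0, Finset.sum_const, Int.card_Ioc, nsmul_eq_mul,
        Int.toNat_of_nonneg (by linarith), mul_one]
      ring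
    rw [hstrip]
    -- head sum
    have hsplit2 := icc_split 0 K (K*D) hKnn hKD
    have hdisj2 : Disjoint (Finset.Icc (0:ℤ) K) (Finset.Ioc K (K*D)) := by
      rw [Finset.disjoint_left]
      intro a ha hb
      simp only [Finset.mem_Icc] at ha
      simp only [Finset.mem_Ioc] at hb
      omega
    have hhead : ∑ x ∈ Finset.Icc (0:ℤ) (K*D), (min x ((k+1:ℕ):ℤ) + (-x)/D + 1)
        = (∑ x ∈ Finset.Icc (0:ℤ) (K*D), (min x (k:ℤ) + (-x)/D + 1)) + K*(D-1) := by
      rw [hsplit2, Finset.sum_union hdisj2, Finset.sum_union hdisj2]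
      have e1 : ∑ x ∈ Finset.Icc (0:ℤ) K, (min x ((k+1:ℕ):ℤ) + (-x)/D + 1)
          = ∑ x ∈ Finset.Icc (0:ℤ) K, (min x (k:ℤ) + (-x)/D + 1) := by
        apply Finset.sum_congr rfl
        intro x hx
        simp only [Finset.mem_Icc] at hx
        rw [hcast, min_eq_left (by omega), min_eq_left (by omega)]
      have e2 : ∑ x ∈ Finset.Ioc (K:ℤ) (K*D), (min x ((k+1:ℕ):ℤ) + (-x)/D + 1)
          = ∑ x ∈ Finset.Ioc (K:ℤ) (K*D), ((min x (k:ℤ) + (-x)/D + 1) + 1) := by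
        apply Finset.sum_congr rfl
        intro x hx
        simp only [Finset.mem_Ioc] at hx
        rw [hcast, min_eq_right (by omega), min_eq_right (by omega)]
        ring
      have e3 : ∑ x ∈ Finset.Ioc (K:ℤ) (K*D), ((min x (k:ℤ) + (-x)/D + 1) + 1)
          = (∑ x ∈ Finset.Ioc (K:ℤ) (K*D), (min x (k:ℤ) + (-x)/D + 1))
            + ∑ _x ∈ Finset.Ioc (K:ℤ) (K*D), (1:ℤ) := Finset.sum_add_distrib
      have e4 : ∑ _x ∈ Finset.Ioc (K:ℤ) (K*D), (1:ℤ) = K*(D-1) := by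
        rw [Finset.sum_const, Int.card_Ioc, nsmul_eq_mul,
          Int.toNat_of_nonneg (by linarith), mul_one]
        ring
      rw [e1, e2, e3, e4]
      ring
    rw [hhead, hcast]
    ring_nf
    ring_nf at ih
    linarith


noncomputable def Tfin (D : ℤ) (k : ℕ) : Finset (ℤ × ℤ) :=
  (Finset.Icc (0:ℤ) (k*D)).biUnion
    (fun x => (Finset.Icc (0:ℤ) (min x (k:ℤ) + (-x)/D)).image (fun y => (x, y)))

theorem mem_Tfin (D : ℤ) (hD : 2 ≤ D) (k : ℕ) (p : ℤ × ℤ) :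
    p ∈ Tfin D k ↔ (0 ≤ p.2 ∧ D*p.2 ≤ (D-1)*p.1 ∧ p.1 + D*p.2 ≤ (k:ℤ)*D) := by
  have hD0 : (0:ℤ) < D := by omega
  obtain ⟨x, y⟩ := p
  simp only [Tfin, Finset.mem_biUnion, Finset.mem_image, Finset.mem_Icc, Prod.mk.injEq]
  have hub : min x (k:ℤ) + (-x)/D = min ((x*(D-1))/D) (((k:ℤ)*D - x)/D) := by
    have h1 : (x*(D-1))/D = (-x)/D + x := by
      rw [show x*(D-1) = -x + x*D by ring, Int.add_mul_ediv_right _ _ (ne_of_gt hD0)]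
    have h2 : ((k:ℤ)*D - x)/D = (-x)/D + k := by
      rw [show (k:ℤ)*D - x = -x + (k:ℤ)*D by ring, Int.add_mul_ediv_right _ _ (ne_of_gt hD0)]
    rw [h1, h2]
    omega
  constructor
  · rintro ⟨x', hx', y', hy', hxy, rfl⟩
    subst hxy
    rw [hub, le_min_iff, Int.le_ediv_iff_mul_le hD0, Int.le_ediv_iff_mul_le hD0] at hy'
    refine ⟨hy'.1, by nlinarith [hy'.2.1], by nlinarith [hy'.2.2]⟩
  · rintro ⟨h1, h2, h3⟩
    have hx0 : 0 ≤ x := by nlinarith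
    refine ⟨x, ⟨hx0, by nlinarith⟩, y, ⟨h1, ?_⟩, rfl, rfl⟩
    rw [hub, le_min_iff, Int.le_ediv_iff_mul_le hD0, Int.le_ediv_iff_mul_le hD0]
    constructor <;> nlinarith

theorem card_Tfin (D : ℤ) (hD : 2 ≤ D) (k : ℕ) :
    ((Tfin D k).card : ℤ) = ∑ x ∈ Finset.Icc (0:ℤ) (k*D), (min x (k:ℤ) + (-x)/D + 1) := by
  have hD0 : (0:ℤ) < D := by omega
  rw [Tfin, Finset.card_biUnion]
  · push_cast
    apply Finset.sum_congr rfl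
    intro x hx
    simp only [Finset.mem_Icc] at hx
    rw [Finset.card_image_of_injective _ (fun a b h => (Prod.ext_iff.1 h).2),
      Int.card_Icc]
    have hnn : 0 ≤ min x (k:ℤ) + (-x)/D := by
      have h5 : -(min x (k:ℤ)) ≤ (-x)/D := by
        rw [Int.le_ediv_iff_mul_le hD0]
        rcases le_total x (k:ℤ) with h | h
        · rw [min_eq_left h]; nlinarith
        · rw [min_eq_right h]; nlinarith
      omega
    rw [Int.toNat_of_nonneg (by omega)]
    push_cast
    ring
  · intro a _ b _ hab
    simp only [Finset.disjoint_left, Finset.mem_image]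
    rintro p ⟨y, _, rfl⟩ ⟨y', _, h⟩
    exact hab (Prod.ext_iff.1 h).1.symm

end Aux

/-- McAllister–Woods: for every `D ≥ 2` there is a rational polygon with
denominator exactly `D` whose Ehrhart counting function is a polynomial. -/
theorem stmt11 (D : ℤ) (hD : 2 ≤ D) :
    ∃ P : Set (ℝ × ℝ), IsRationalPolygon P ∧
      IsIntegralPolytope2 ((D : ℝ) • P) ∧
      (∀ m : ℤ, 0 < m → m < D → ¬ IsIntegralPolytope2 ((m : ℝ) • P)) ∧
      ∃ a b c : ℚ, ∀ k : ℕ, 1 ≤ k →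
        (latticeCount2 ((k : ℝ) • P) : ℚ) = a * k ^ 2 + b * k + c := by
  have hD' : (2:ℝ) ≤ (D:ℝ) := by exact_mod_cast hD
  have hDpos : (0:ℝ) < (D:ℝ) := by linarith
  have hDne : (D:ℝ) ≠ 0 := ne_of_gt hDpos
  set S : Set (ℝ×ℝ) := {((0:ℝ),(0:ℝ)), (1, ((D:ℝ)-1)/(D:ℝ)), ((D:ℝ), 0)} with hS
  refine ⟨convexHull ℝ S, ⟨⟨{((0:ℚ),(0:ℚ)), (1, ((D:ℚ)-1)/(D:ℚ)), ((D:ℚ), 0)},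
    (Set.toFinite _), ?_⟩, ?_⟩, ?_, ?_, ?_⟩
  · -- hull of rational points
    congr 1
    rw [Set.image_insert_eq, Set.image_insert_eq, Set.image_singleton]
    push_cast
    rfl
  · -- noncollinear
    intro hcol
    have hsub : S ⊆ convexHull ℝ S := subset_convexHull ℝ S
    have hcolS : Collinear ℝ S := hcol.subset hsub
    have h0 : ((0:ℝ),(0:ℝ)) ∈ S := Set.mem_insert _ _
    rw [collinear_iff_of_mem h0] at hcolS
    obtain ⟨v, hv⟩ := hcolS
    obtain ⟨r1, hr1⟩ := hv (1, ((D:ℝ)-1)/(D:ℝ)) (by simp [hS])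
    obtain ⟨rD, hrD⟩ := hv ((D:ℝ), 0) (by simp [hS])
    have h2 : rD * v.2 = 0 := by
      have := congrArg Prod.snd hrD
      simpa [Prod.snd_add, Prod.smul_snd, smul_eq_mul] using this.symm
    have h1 : rD * v.1 = (D:ℝ) := by
      have := congrArg Prod.fst hrD
      simpa [Prod.fst_add, Prod.smul_fst, smul_eq_mul] using this.symm
    have hrD0 : rD ≠ 0 := by
      intro h; rw [h, zero_mul] at h1; exact hDne h1.symm
    have hv2 : v.2 = 0 := by
      rcases mul_eq_zero.1 h2 with h | h
      · exact absurd h hrD0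
      · exact h
    have h3 : r1 * v.2 = ((D:ℝ)-1)/(D:ℝ) := by
      have := congrArg Prod.snd hr1
      simpa [Prod.snd_add, Prod.smul_snd, smul_eq_mul] using this.symm
    rw [hv2, mul_zero] at h3
    have hpos : (0:ℝ) < ((D:ℝ)-1)/(D:ℝ) := div_pos (by linarith) hDpos
    rw [← h3] at hpos
    exact lt_irrefl _ hpos
  · -- D • P is integral
    refine ⟨{((0:ℤ),(0:ℤ)), (D, D-1), (D*D, 0)}, Set.toFinite _, ?_⟩
    rw [← convexHull_smul]
    congr 1
    rw [Set.image_insert_eq, Set.image_insert_eq, Set.image_singleton, hS,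
      Set.smul_set_insert, Set.smul_set_insert, Set.smul_set_singleton]
    have e1 : (D:ℝ) • (((0:ℝ),(0:ℝ)) : ℝ×ℝ) = ((0:ℝ),(0:ℝ)) := by
      simp [Prod.smul_mk]
    have e2 : (D:ℝ) • ((1, ((D:ℝ)-1)/(D:ℝ)) : ℝ×ℝ) = ((D:ℝ), (D:ℝ)-1) := by
      simp only [Prod.smul_mk, smul_eq_mul, mul_one]
      congr 1
      field_simp
    have e3 : (D:ℝ) • (((D:ℝ), 0) : ℝ×ℝ) = ((D:ℝ)*(D:ℝ), 0) := by
      simp [Prod.smul_mk, smul_eq_mul]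
    rw [e1, e2, e3]
    push_cast
    rfl
  · -- no smaller dilate is integral
    intro m hm0 hmD hInt
    obtain ⟨W, hWfin, hEq⟩ := hInt
    have hmR : (0:ℝ) < (m:ℝ) := by exact_mod_cast hm0
    have htri := tri D hD (m:ℝ) hmR
    rw [← hS] at htri
    set B : ℝ×ℝ := ((m:ℝ), (m:ℝ)*((D:ℝ)-1)/(D:ℝ)) with hB
    have hBmem : B ∈ (m:ℝ) • convexHull ℝ S := by
      rw [htri]
      refine ⟨div_nonneg (by nlinarith) (le_of_lt hDpos), le_of_eq (by rw [hB]; field_simp), le_of_eq (by rw [hB]; field_simp; ring)⟩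
    -- every vertex has small second coordinate
    set α : ℝ := ((m:ℝ)*((D:ℝ)-1) - 1)/(D:ℝ) with hα
    have hvert : ∀ w ∈ (fun p : ℤ × ℤ => ((p.1 : ℝ), (p.2 : ℝ))) '' W, w.2 ≤ α := by
      rintro w ⟨p, hpW, rfl⟩
      have hwmem : ((p.1:ℝ), (p.2:ℝ)) ∈ (m:ℝ) • convexHull ℝ S := by
        rw [hEq]
        exact subset_convexHull ℝ _ ⟨p, hpW, rfl⟩
      rw [htri] at hwmem
      obtain ⟨hw1, hw2, hw3⟩ := hwmem
      have key : (D:ℝ) * (p.2:ℝ) ≤ (m:ℝ)*((D:ℝ)-1) := by nlinarith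
      have keyZ : D * p.2 ≤ m*(D-1) := by exact_mod_cast key
      have hne : D * p.2 ≠ m*(D-1) := by
        intro h
        have hfac : m = D*(m - p.2) := by ring_nf; ring_nf at h; omega
        have h1 : 1 ≤ m - p.2 := by nlinarith
        nlinarith
      have keyZ' : D * p.2 ≤ m*(D-1) - 1 := by omega
      have : (D:ℝ) * (p.2:ℝ) ≤ (m:ℝ)*((D:ℝ)-1) - 1 := by exact_mod_cast keyZ'
      rw [hα]
      rw [le_div_iff₀ hDpos]
      simpa [mul_comm] using this
    -- the halfplane is convex and contains the hull
    have hhalf : Convex ℝ {q : ℝ×ℝ | q.2 ≤ α} := by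
      intro x hx y hy a b ha hb hab
      simp only [Set.mem_setOf_eq, Prod.snd_add, Prod.smul_snd, smul_eq_mul] at *
      have h4 : a*α + b*α = α := by rw [← add_mul, hab, one_mul]
      nlinarith [mul_le_mul_of_nonneg_left hx ha, mul_le_mul_of_nonneg_left hy hb]
    have hsub2 : (m:ℝ) • convexHull ℝ S ⊆ {q : ℝ×ℝ | q.2 ≤ α} := by
      rw [hEq]
      exact convexHull_min hvert hhalf
    have : B.2 ≤ α := hsub2 hBmem
    rw [hB, hα] at this
    simp only at this
    rw [div_le_div_iff₀ hDpos hDpos] at this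
    nlinarith
  · -- Ehrhart polynomial
    refine ⟨((D:ℚ)-1)/2, ((D:ℚ)+1)/2, 1, ?_⟩
    intro k hk
    have hkR : (0:ℝ) < (k:ℝ) := by exact_mod_cast hk
    have htri := tri D hD (k:ℝ) hkR
    rw [← hS] at htri
    have hseteq : {p : ℤ × ℤ | ((p.1 : ℝ), (p.2 : ℝ)) ∈ (k:ℝ) • convexHull ℝ S}
        = ↑(Tfin D k) := by
      ext p
      rw [htri]
      simp only [Set.mem_setOf_eq, Finset.mem_coe]
      rw [mem_Tfin D hD k p]
      constructor
      · rintro ⟨h1, h2, h3⟩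
        refine ⟨by exact_mod_cast h1, by exact_mod_cast h2, by exact_mod_cast h3⟩
      · rintro ⟨h1, h2, h3⟩
        refine ⟨by exact_mod_cast h1, by exact_mod_cast h2, by push_cast; exact_mod_cast h3⟩
    have hcount : latticeCount2 ((k:ℝ) • convexHull ℝ S) = (Tfin D k).card := by
      rw [latticeCount2, hseteq, Set.ncard_coe_finset]
    rw [hcount]
    have h1 := card_Tfin D hD k
    have h2 := sumlem D hD k
    rw [← h1] at h2
    have h3 : (2:ℚ) * ((Tfin D k).card : ℚ) = ((D:ℚ)-1)*(k:ℚ)^2 + ((D:ℚ)+1)*(k:ℚ) + 2 := by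
      exact_mod_cast congrArg (Int.cast : ℤ → ℚ) h2
    field_simp
    linarith
end

section
/- Two rational polytopes P, Q ⊂ ℝⁿ are weakly GLₙ(ℤ)-equidecomposable if and only if there exists a positive integer k such that kP and kQ are GLₙ(ℤ)-equidecomposable (with translations in ℤⁿ). -/
open Pointwise

/-- Number of points of `ℤⁿ` lying in a subset of `ℝⁿ`. -/
noncomputable def latticeCount {n : ℕ} (S : Set (Fin n → ℝ)) : ℕ :=
  {p : Fin n → ℤ | (fun i => (p i : ℝ)) ∈ S}.ncard

/-- A relatively open simplex. -/
def IsOpenSimplex {n : ℕ} (S : Set (Fin n → ℝ)) : Prop :=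
  ∃ (d : ℕ) (v : Fin (d + 1) → (Fin n → ℝ)),
    AffineIndependent ℝ v ∧ S = intrinsicInterior ℝ (convexHull ℝ (Set.range v))

/-- An affine unimodular transformation `x ↦ Ax + v`, `A ∈ GLₙ(ℤ)`, `v ∈ ℤⁿ`. -/
def IsAffUnimodular {n : ℕ} (U : (Fin n → ℝ) → (Fin n → ℝ)) : Prop :=
  ∃ (A : Matrix (Fin n) (Fin n) ℤ) (v : Fin n → ℤ), IsUnit A.det ∧
    ∀ x, U x = fun i => (∑ j, (A i j : ℝ) * x j) + (v i : ℝ)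

/-- An affine transformation `x ↦ Ax + v` with `A ∈ GLₙ(ℤ)` and `v ∈ ℚⁿ`. -/
def IsAffUnimodularQ {n : ℕ} (U : (Fin n → ℝ) → (Fin n → ℝ)) : Prop :=
  ∃ (A : Matrix (Fin n) (Fin n) ℤ) (v : Fin n → ℚ), IsUnit A.det ∧
    ∀ x, U x = fun i => (∑ j, (A i j : ℝ) * x j) + (v i : ℝ)

/-- `GLₙ(ℤ)`-equidecomposability (integral translations). -/
def Equidecomposable {n : ℕ} (P Q : Set (Fin n → ℝ)) : Prop :=
  ∃ (r : ℕ) (T : Fin r → Set (Fin n → ℝ)) (U : Fin r → (Fin n → ℝ) → (Fin n → ℝ)),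
    (∀ i, IsOpenSimplex (T i)) ∧ (∀ i, IsAffUnimodular (U i)) ∧
    (Set.univ : Set (Fin r)).PairwiseDisjoint T ∧
    (Set.univ : Set (Fin r)).PairwiseDisjoint (fun i => U i '' T i) ∧
    P = ⋃ i, T i ∧ Q = ⋃ i, U i '' T i

/-- Weak `GLₙ(ℤ)`-equidecomposability (rational translations allowed). -/
def WeaklyEquidecomposable {n : ℕ} (P Q : Set (Fin n → ℝ)) : Prop :=
  ∃ (r : ℕ) (T : Fin r → Set (Fin n → ℝ)) (U : Fin r → (Fin n → ℝ) → (Fin n → ℝ)),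
    (∀ i, IsOpenSimplex (T i)) ∧ (∀ i, IsAffUnimodularQ (U i)) ∧
    (Set.univ : Set (Fin r)).PairwiseDisjoint T ∧
    (Set.univ : Set (Fin r)).PairwiseDisjoint (fun i => U i '' T i) ∧
    P = ⋃ i, T i ∧ Q = ⋃ i, U i '' T i

/-- A rational polytope in `ℝⁿ`. -/
def IsRationalPolytope {n : ℕ} (P : Set (Fin n → ℝ)) : Prop :=
  ∃ V : Set (Fin n → ℚ), V.Finite ∧
    P = convexHull ℝ ((fun q : Fin n → ℚ => fun i => ((q i : ℝ))) '' V)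

/-- An integral polytope in `ℝⁿ`. -/
def IsIntegralPolytope {n : ℕ} (P : Set (Fin n → ℝ)) : Prop :=
  ∃ V : Set (Fin n → ℤ), V.Finite ∧
    P = convexHull ℝ ((fun q : Fin n → ℤ => fun i => ((q i : ℝ))) '' V)

/-! ### Auxiliary lemmas -/

lemma intrinsicInterior_smul' {V : Type*} [NormedAddCommGroup V] [NormedSpace ℝ V]
    {c : ℝ} (hc : c ≠ 0) (s : Set V) :
    intrinsicInterior ℝ (c • s) = c • intrinsicInterior ℝ s := by
  have hspan : ((affineSpan ℝ (c • s) : AffineSubspace ℝ V) : Set V)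
      = c • ((affineSpan ℝ s : AffineSubspace ℝ V) : Set V) := by
    have h1 : c • s = (LinearMap.lsmul ℝ V c).toAffineMap '' s := by
      simp [Set.image_smul]
      rfl
    rw [h1, ← AffineSubspace.map_span]
    ext x
    simp only [AffineSubspace.coe_map, Set.mem_image, SetLike.mem_coe]
    rfl
  have hmem1 : ∀ x : (affineSpan ℝ s : AffineSubspace ℝ V), c • (x : V) ∈ affineSpan ℝ (c • s) := by
    intro x
    rw [← SetLike.mem_coe, hspan]
    exact Set.smul_mem_smul_set x.2
  have hmem2 : ∀ y : (affineSpan ℝ (c • s) : AffineSubspace ℝ V),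
      c⁻¹ • (y : V) ∈ affineSpan ℝ s := by
    intro y
    have hy : (y : V) ∈ c • ((affineSpan ℝ s : AffineSubspace ℝ V) : Set V) := by
      rw [← hspan]; exact y.2
    obtain ⟨z, hz, hzy⟩ := Set.mem_smul_set.mp hy
    rw [← hzy, inv_smul_smul₀ hc]
    exact hz
  let g : (affineSpan ℝ s : AffineSubspace ℝ V) ≃ₜ (affineSpan ℝ (c • s) : AffineSubspace ℝ V) :=
    { toFun := fun x => ⟨c • (x : V), hmem1 x⟩
      invFun := fun y => ⟨c⁻¹ • (y : V), hmem2 y⟩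
      left_inv := fun x => by ext; exact inv_smul_smul₀ hc _
      right_inv := fun y => by ext; exact smul_inv_smul₀ hc _
      continuous_toFun := Continuous.subtype_mk (continuous_subtype_val.const_smul c) hmem1
      continuous_invFun := Continuous.subtype_mk (continuous_subtype_val.const_smul c⁻¹) hmem2 }
  have hpre : ((↑) ⁻¹' (c • s) : Set (affineSpan ℝ (c • s))) = g '' ((↑) ⁻¹' s) := by
    ext y
    simp only [Set.mem_preimage, Set.mem_image]
    constructor
    · intro hy
      obtain ⟨x, hx, hcx⟩ := Set.mem_smul_set.mp hy
      refine ⟨⟨x, subset_affineSpan ℝ s hx⟩, hx, ?_⟩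
      exact Subtype.ext hcx
    · rintro ⟨x, hx, rfl⟩
      exact Set.smul_mem_smul_set hx
  rw [intrinsicInterior, intrinsicInterior, hpre, ← g.image_interior, Set.image_image]
  ext y
  simp only [Set.mem_image, Set.mem_smul_set]
  constructor
  · rintro ⟨x, hx, rfl⟩
    exact ⟨↑x, ⟨x, hx, rfl⟩, rfl⟩
  · rintro ⟨v, ⟨x, hx, rfl⟩, rfl⟩
    exact ⟨x, hx, rfl⟩

lemma IsOpenSimplex.smul' {n : ℕ} {S : Set (Fin n → ℝ)} {c : ℝ} (hc : c ≠ 0)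
    (h : IsOpenSimplex S) : IsOpenSimplex (c • S) := by
  obtain ⟨d, v, hv, rfl⟩ := h
  refine ⟨d, fun i => c • v i, ?_, ?_⟩
  · have h1 : (fun i => c • v i) = (LinearMap.lsmul ℝ (Fin n → ℝ) c).toAffineMap ∘ v := rfl
    rw [h1]
    exact hv.map' _ (smul_right_injective _ hc)
  · rw [Set.range_smul, convexHull_smul, intrinsicInterior_smul' hc]

lemma pairwiseDisjoint_smul' {n r : ℕ} {c : ℝ} (hc : c ≠ 0) {T : Fin r → Set (Fin n → ℝ)}
    (h : (Set.univ : Set (Fin r)).PairwiseDisjoint T) :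
    (Set.univ : Set (Fin r)).PairwiseDisjoint (fun i => c • T i) := by
  intro i _ j _ hij
  have := Set.disjoint_image_of_injective (smul_right_injective (Fin n → ℝ) hc)
    (h (Set.mem_univ i) (Set.mem_univ j) hij)
  simpa [Function.onFun, Set.image_smul] using this

/-- Image of a scaled set under the translated affine map. -/
lemma image_scaled {n : ℕ} (c : ℝ) (A : Matrix (Fin n) (Fin n) ℤ) (b : Fin n → ℝ)
    (U U' : (Fin n → ℝ) → (Fin n → ℝ))
    (hU : ∀ x, U x = fun j => (∑ l, (A j l : ℝ) * x l) + b j)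
    (hU' : ∀ x, U' x = fun j => (∑ l, (A j l : ℝ) * x l) + c * b j)
    (T : Set (Fin n → ℝ)) :
    U' '' (c • T) = c • (U '' T) := by
  have key : ∀ x, U' (c • x) = c • U x := by
    intro x
    rw [hU, hU']
    funext j
    simp only [Pi.smul_apply, smul_eq_mul, mul_add, Finset.mul_sum]
    congr 1
    exact Finset.sum_congr rfl fun l _ => by ring
  calc U' '' (c • T) = U' '' ((fun x => c • x) '' T) := by rw [Set.image_smul]
    _ = (fun x => U' (c • x)) '' T := by rw [Set.image_image]
    _ = (fun x => c • U x) '' T := by simp only [key]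
    _ = (fun y => c • y) '' (U '' T) := by rw [Set.image_image]
    _ = c • (U '' T) := by rw [Set.image_smul]

theorem stmt13 {n : ℕ} (P Q : Set (Fin n → ℝ))
    (hP : IsRationalPolytope P) (hQ : IsRationalPolytope Q) :
    WeaklyEquidecomposable P Q ↔
      ∃ k : ℕ, 0 < k ∧ Equidecomposable ((k : ℝ) • P) ((k : ℝ) • Q) := by
  constructor
  · rintro ⟨r, T, U, hT, hU, hd1, hd2, hPd, hQd⟩
    choose A v hdet hUeq using hU
    set k : ℕ := ∏ p : Fin r × Fin n, (v p.1 p.2).den with hk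
    have hkpos : 0 < k := Finset.prod_pos fun p _ => (v p.1 p.2).pos
    have hkR : ((k : ℝ)) ≠ 0 := by positivity
    have hint : ∀ i j, ∃ z : ℤ, (z : ℚ) = (k : ℚ) * v i j := by
      intro i j
      obtain ⟨m, hm⟩ : (v i j).den ∣ k :=
        Finset.dvd_prod_of_mem _ (Finset.mem_univ ((i, j) : Fin r × Fin n))
      refine ⟨m * (v i j).num, ?_⟩
      push_cast
      rw [← Rat.mul_den_eq_num (v i j), hm]
      push_cast
      ring
    choose w hw using hint
    have hwR : ∀ i j, ((w i j : ℝ)) = (k : ℝ) * ((v i j : ℚ) : ℝ) := by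
      intro i j
      have := hw i j
      exact_mod_cast congrArg (fun q : ℚ => (q : ℝ)) this
    refine ⟨k, hkpos, r, fun i => (k : ℝ) • T i,
      fun i => fun x => fun j => (∑ l, (A i j l : ℝ) * x l) + (w i j : ℝ),
      fun i => (hT i).smul' hkR, fun i => ⟨A i, w i, hdet i, fun x => rfl⟩,
      pairwiseDisjoint_smul' hkR hd1, ?_, ?_, ?_⟩
    · have himg : ∀ i, (fun x => fun j => (∑ l, (A i j l : ℝ) * x l) + (w i j : ℝ)) ''
          ((k : ℝ) • T i) = (k : ℝ) • (U i '' T i) := by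
        intro i
        exact image_scaled (k : ℝ) (A i) (fun j => ((v i j : ℚ) : ℝ)) (U i) _
          (hUeq i) (fun x => by funext j; rw [hwR i j]) (T i)
      have := pairwiseDisjoint_smul' hkR (T := fun i => U i '' T i) hd2
      convert this using 2 with i
      exact himg i
    · rw [hPd, Set.smul_set_iUnion]
    · have himg : ∀ i, (fun x => fun j => (∑ l, (A i j l : ℝ) * x l) + (w i j : ℝ)) ''
          ((k : ℝ) • T i) = (k : ℝ) • (U i '' T i) := by
        intro i
        exact image_scaled (k : ℝ) (A i) (fun j => ((v i j : ℚ) : ℝ)) (U i) _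
          (hUeq i) (fun x => by funext j; rw [hwR i j]) (T i)
      rw [hQd, Set.smul_set_iUnion]
      exact Set.iUnion_congr fun i => (himg i).symm
  · rintro ⟨k, hkpos, r, T, U, hT, hU, hd1, hd2, hPd, hQd⟩
    choose A v hdet hUeq using hU
    have hkR : ((k : ℝ)) ≠ 0 := by positivity
    have hcR : ((k : ℝ))⁻¹ ≠ 0 := inv_ne_zero hkR
    refine ⟨r, fun i => ((k : ℝ))⁻¹ • T i,
      fun i => fun x => fun j => (∑ l, (A i j l : ℝ) * x l) + (((v i j : ℚ) / (k : ℚ) : ℚ) : ℝ),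
      fun i => (hT i).smul' hcR,
      fun i => ⟨A i, fun j => (v i j : ℚ) / (k : ℚ), hdet i, fun x => rfl⟩,
      pairwiseDisjoint_smul' hcR hd1, ?_, ?_, ?_⟩
    · have himg : ∀ i, (fun x => fun j => (∑ l, (A i j l : ℝ) * x l) +
          (((v i j : ℚ) / (k : ℚ) : ℚ) : ℝ)) '' (((k : ℝ))⁻¹ • T i)
          = ((k : ℝ))⁻¹ • (U i '' T i) := by
        intro i
        refine image_scaled ((k : ℝ))⁻¹ (A i) (fun j => (v i j : ℝ)) (U i) _ (hUeq i)
          (fun x => by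
            funext j
            push_cast
            rw [div_eq_inv_mul]) (T i)
      have := pairwiseDisjoint_smul' hcR (T := fun i => U i '' T i) hd2
      convert this using 2 with i
      exact himg i
    · rw [eq_comm, ← Set.smul_set_iUnion, ← hPd, smul_smul, inv_mul_cancel₀ hkR, one_smul]
    · have himg : ∀ i, (fun x => fun j => (∑ l, (A i j l : ℝ) * x l) +
          (((v i j : ℚ) / (k : ℚ) : ℚ) : ℝ)) '' (((k : ℝ))⁻¹ • T i)
          = ((k : ℝ))⁻¹ • (U i '' T i) := by
        intro i
        refine image_scaled ((k : ℝ))⁻¹ (A i) (fun j => (v i j : ℝ)) (U i) _ (hUeq i)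
          (fun x => by
            funext j
            push_cast
            rw [div_eq_inv_mul]) (T i)
      have : Q = ((k : ℝ))⁻¹ • ((k : ℝ) • Q) := by
        rw [smul_smul, inv_mul_cancel₀ hkR, one_smul]
      rw [this, hQd, Set.smul_set_iUnion]
      exact Set.iUnion_congr fun i => (himg i).symm
end

section
/- (Ehrhart reciprocity for open simplices, used in the paper) If S is a d-dimensional open lattice simplex (the relative interior of the convex hull of d+1 affinely independent lattice points) in ℝⁿ, then the counting function k ↦ |kS ∩ ℤⁿ| is a polynomial in k for positive integers k. -/
open Pointwise Set Finset

section OpenSimplex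

variable {ι : Type*} [Fintype ι] [Nonempty ι] {E : Type*} [NormedAddCommGroup E]
  [NormedSpace ℝ E] [FiniteDimensional ℝ E]

theorem intrinsicInterior_convexHull_range {V : ι → E} (hv : AffineIndependent ℝ V) :
    intrinsicInterior ℝ (convexHull ℝ (Set.range V)) =
      {x | ∃ w : ι → ℝ, (∀ i, 0 < w i) ∧ ∑ i, w i = 1 ∧ ∑ i, w i • V i = x} := by
  classical
  set A := convexHull ℝ (Set.range V) with hA
  have hVA : ∀ i, V i ∈ A := fun i => subset_convexHull ℝ _ ⟨i, rfl⟩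
  haveI : Nonempty (affineSpan ℝ A) :=
    ⟨⟨V (Classical.arbitrary ι), subset_affineSpan ℝ A (hVA _)⟩⟩
  haveI : Nonempty ↑A := ⟨⟨V (Classical.arbitrary ι), hVA _⟩⟩
  set Q := affineSpan ℝ A with hQ
  have hVmem : ∀ i, V i ∈ Q := fun i => subset_affineSpan ℝ A (hVA i)
  set V' : ι → Q := fun i => ⟨V i, hVmem i⟩ with hV'
  have hcomp : (⇑Q.subtype) ∘ V' = V := rfl
  have hind : AffineIndependent ℝ V' := AffineIndependent.of_comp Q.subtype (hcomp ▸ hv)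
  have hspanA : affineSpan ℝ (Set.range V) = affineSpan ℝ A := (affineSpan_convexHull _).symm
  have htot : affineSpan ℝ (Set.range V') = ⊤ := by
    refine le_antisymm le_top ?_
    rw [← affineSpan_coe_preimage_eq_top A]
    refine affineSpan_le.2 ?_
    rintro q hq
    have hx : (q : E) ∈ affineSpan ℝ (Set.range V) := by
      rw [hspanA]; exact subset_affineSpan ℝ A hq
    have hmap : affineSpan ℝ (Set.range V) =
        AffineSubspace.map Q.subtype (affineSpan ℝ (Set.range V')) := by
      rw [AffineSubspace.map_span, ← Set.range_comp, hcomp]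
    rw [hmap] at hx
    obtain ⟨y, hy, hyx⟩ := hx
    have : y = q := Subtype.ext hyx
    rw [← this]; exact hy
  set b : AffineBasis ι ℝ Q := ⟨V', hind, htot⟩ with hb
  have hbcoe : ⇑b = V' := rfl
  have key : ∀ w : ι → ℝ, ∑ i, w i = 1 →
      ((Finset.univ.affineCombination ℝ V' w : Q) : E) = ∑ i, w i • V i := by
    intro w hw
    have h1 := map_affineCombination Finset.univ V' w hw Q.subtype
    rw [hcomp] at h1
    rw [show ((Finset.univ.affineCombination ℝ V' w : Q) : E)
      = Q.subtype (Finset.univ.affineCombination ℝ V' w) from rfl, h1,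
      affineCombination_eq_linear_combination _ _ _ hw]
  have hmemA : ∀ q : Q, (q : E) ∈ A ↔ ∀ i, 0 ≤ b.coord i q := by
    intro q
    constructor
    · intro h
      rw [hA, convexHull_range_eq_exists_affineCombination] at h
      obtain ⟨s, w, hw0, hw1, hx⟩ := h
      have h1 := map_affineCombination s V' w hw1 Q.subtype
      rw [hcomp] at h1
      have hq : s.affineCombination ℝ V' w = q := Subtype.ext (by rw [← hx, ← h1]; rfl)
      intro i
      by_cases hi : i ∈ s
      · have hcc := b.coord_apply_combination_of_mem hi hw1
        rw [hbcoe] at hcc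
        rw [← hq, hcc]; exact hw0 i hi
      · have hcc := b.coord_apply_combination_of_notMem hi hw1
        rw [hbcoe] at hcc
        rw [← hq, hcc]
    · intro h
      rw [hA, convexHull_range_eq_exists_affineCombination]
      refine ⟨Finset.univ, fun i => b.coord i q, fun i _ => h i, b.sum_coord_apply_eq_one q, ?_⟩
      have h1 := map_affineCombination Finset.univ V' (fun i => b.coord i q)
        (b.sum_coord_apply_eq_one q) Q.subtype
      rw [hcomp] at h1
      have hcc := b.affineCombination_coord_eq_self q
      rw [hbcoe] at hcc
      rw [← h1, hcc]; rfl
  have hpre : (Subtype.val ⁻¹' A : Set Q) = ⋂ i, b.coord i ⁻¹' Set.Ici 0 := by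
    ext q; simp [hmemA q, Set.mem_iInter]
  have hint : interior (Subtype.val ⁻¹' A : Set Q) = {q | ∀ i, 0 < b.coord i q} := by
    rw [hpre]
    rcases subsingleton_or_nontrivial ι with hsub | hnt
    · have hQsub : Subsingleton Q := by
        have hru : Set.range V' = Set.univ :=
          AffineSubspace.eq_univ_of_subsingleton_span_eq_top (Set.subsingleton_range V') htot
        refine ⟨fun a c => ?_⟩
        have ha : a ∈ Set.range V' := hru ▸ Set.mem_univ a
        have hc : c ∈ Set.range V' := hru ▸ Set.mem_univ c
        obtain ⟨i, rfl⟩ := ha; obtain ⟨i', rfl⟩ := hc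
        rw [Subsingleton.elim i i']
      have hcoord1 : ∀ (q : Q) (i : ι), b.coord i q = 1 := by
        intro q i
        have := b.sum_coord_apply_eq_one q
        rwa [Fintype.sum_eq_single i (fun j hj => absurd (Subsingleton.elim j i) hj)] at this
      have hopen : ∀ s : Set Q, IsOpen s := by
        intro s
        rcases s.eq_empty_or_nonempty with rfl | ⟨q, hq⟩
        · exact isOpen_empty
        · have : s = Set.univ := Set.eq_univ_of_forall fun q' => (Subsingleton.elim q' q) ▸ hq
          rw [this]; exact isOpen_univ
      rw [IsOpen.interior_eq (hopen _)]
      ext q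
      simp [hcoord1 q]
    · rw [interior_iInter_of_finite]
      ext q
      simp only [Set.mem_iInter, Set.mem_preimage, Set.mem_setOf_eq]
      refine forall_congr' fun i => ?_
      rw [← IsOpenMap.preimage_interior_eq_interior_preimage (isOpenMap_barycentric_coord b i)
        (continuous_barycentric_coord b i), interior_Ici]
      rfl
  ext x
  rw [intrinsicInterior]
  simp only [Set.mem_image, Set.mem_setOf_eq]
  constructor
  · rintro ⟨q, hq, rfl⟩
    have hq' : ∀ i, 0 < b.coord i q := (Set.ext_iff.1 hint q).1 hq
    refine ⟨fun i => b.coord i q, hq', b.sum_coord_apply_eq_one q, ?_⟩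
    have hcc := b.affineCombination_coord_eq_self q
    rw [hbcoe] at hcc
    rw [← key _ (b.sum_coord_apply_eq_one q), hcc]
  · rintro ⟨w, hw0, hw1, rfl⟩
    have hxQ : (∑ i, w i • V i) ∈ Q := by
      have h2 := affineCombination_mem_affineSpan (s := Finset.univ) (w := w) hw1 V
      rw [affineCombination_eq_linear_combination _ _ _ hw1] at h2
      rw [show Q = affineSpan ℝ A from rfl, ← hspanA]
      exact h2
    refine ⟨⟨_, hxQ⟩, (Set.ext_iff.1 hint ⟨_, hxQ⟩).2 ?_, rfl⟩
    have hq : (⟨_, hxQ⟩ : Q) = Finset.univ.affineCombination ℝ V' w :=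
      Subtype.ext (by rw [key w hw1])
    intro i
    have hcc := b.coord_apply_combination_of_mem (s := Finset.univ) (Finset.mem_univ i) hw1
    rw [hbcoe] at hcc
    rw [hq, hcc]
    exact hw0 i

end OpenSimplex

section Counting

variable {n d : ℕ}

/-- Unique barycentric weights. -/
theorem weights_unique {ι E : Type*} [Fintype ι] [AddCommGroup E] [Module ℝ E] {V : ι → E}
    (hv : AffineIndependent ℝ V) {w w' : ι → ℝ} (h1 : ∑ i, w i = ∑ i, w' i)
    (h2 : ∑ i, w i • V i = ∑ i, w' i • V i) : w = w' := by
  rw [affineIndependent_iff] at hv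
  have h := hv Finset.univ (w - w')
    (by simpa [Finset.sum_sub_distrib] using sub_eq_zero.2 h1)
    (by simpa [sub_smul, Finset.sum_sub_distrib] using sub_eq_zero.2 h2)
  funext i
  simpa [sub_eq_zero] using h i (Finset.mem_univ i)

/-- Real coordinates of the lattice simplex vertices. -/
def ehrV (v : Fin (d + 1) → Fin n → ℤ) : Fin (d + 1) → (Fin n → ℝ) :=
  fun i m => (v i m : ℝ)

/-- Dilated open simplex described by weights. -/
def ehrS (v : Fin (d + 1) → Fin n → ℤ) (c : ℝ) : Set (Fin n → ℝ) :=
  {x | ∃ μ : Fin (d + 1) → ℝ, (∀ i, 0 < μ i) ∧ ∑ i, μ i = c ∧ ∑ i, μ i • ehrV v i = x}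

/-- Integral weight vectors at level `k`. -/
def ehrM (v : Fin (d + 1) → Fin n → ℤ) (k : ℕ) : Set (Fin (d + 1) → ℝ) :=
  {μ | (∀ i, 0 < μ i) ∧ (∑ i, μ i = (k : ℝ)) ∧
    ∀ m, ∃ z : ℤ, ∑ i, μ i * (v i m : ℝ) = (z : ℝ)}

/-- Half-open box pieces at height `j`. -/
def ehrBox (v : Fin (d + 1) → Fin n → ℤ) (j : ℕ) : Set (Fin (d + 1) → ℝ) :=
  {t | (∀ i, 0 < t i ∧ t i ≤ 1) ∧ (∑ i, t i = (j : ℝ)) ∧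
    ∀ m, ∃ z : ℤ, ∑ i, t i * (v i m : ℝ) = (z : ℝ)}

/-- Floor map recovering lattice points from weights. -/
noncomputable def ehrFl (v : Fin (d + 1) → Fin n → ℤ) (μ : Fin (d + 1) → ℝ) : Fin n → ℤ :=
  fun m => ⌊∑ i, μ i * (v i m : ℝ)⌋

theorem ehr_uniq {v : Fin (d + 1) → Fin n → ℤ} (hv : AffineIndependent ℝ (ehrV v))
    {μ μ' : Fin (d + 1) → ℝ} (h1 : ∑ i, μ i = ∑ i, μ' i)
    (h2 : ∀ m, ∑ i, μ i * (v i m : ℝ) = ∑ i, μ' i * (v i m : ℝ)) : μ = μ' := by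
  refine weights_unique hv h1 (funext fun m => ?_)
  simpa [Finset.sum_apply, ehrV] using h2 m

theorem ehrBox_finite {v : Fin (d + 1) → Fin n → ℤ} (hv : AffineIndependent ℝ (ehrV v))
    (j : ℕ) : (ehrBox v j).Finite := by
  have hinj : Set.InjOn (ehrFl v) (ehrBox v j) := by
    rintro t ⟨ht1, ht2, ht3⟩ t' ⟨ht1', ht2', ht3'⟩ h
    refine ehr_uniq hv (by rw [ht2, ht2']) fun m => ?_
    obtain ⟨z, hz⟩ := ht3 m
    obtain ⟨z', hz'⟩ := ht3' m
    have h1 : ehrFl v t m = z := by rw [ehrFl, hz, Int.floor_intCast]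
    have h2 : ehrFl v t' m = z' := by rw [ehrFl, hz', Int.floor_intCast]
    have : z = z' := by rw [← h1, ← h2, h]
    rw [hz, hz', this]
  refine Set.Finite.of_finite_image (Set.Finite.subset
    (Set.Finite.pi (fun m => Set.finite_Icc (-(∑ i, |v i m|)) (∑ i, |v i m|))) ?_) hinj
  rintro p ⟨t, ⟨ht1, _, _⟩, rfl⟩
  intro m _
  have hbound : |∑ i, t i * (v i m : ℝ)| ≤ ((∑ i, |v i m| : ℤ) : ℝ) := by
    refine le_trans (Finset.abs_sum_le_sum_abs _ _) ?_
    push_cast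
    refine Finset.sum_le_sum fun i _ => ?_
    rw [abs_mul]
    calc |t i| * |(v i m : ℝ)| ≤ 1 * |(v i m : ℝ)| := by
          refine mul_le_mul_of_nonneg_right ?_ (abs_nonneg _)
          rw [abs_of_pos (ht1 i).1]; exact (ht1 i).2
      _ = |(v i m : ℝ)| := one_mul _
  rw [abs_le] at hbound
  constructor
  · rw [show (-(∑ i, |v i m|) : ℤ) = ⌊(-((∑ i, |v i m| : ℤ) : ℝ) : ℝ)⌋ by
      rw [← Int.cast_neg, Int.floor_intCast]]
    exact Int.floor_le_floor hbound.1
  · rw [show ((∑ i, |v i m|) : ℤ) = ⌊((∑ i, |v i m| : ℤ) : ℝ)⌋ by rw [Int.floor_intCast]]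
    exact Int.floor_le_floor hbound.2

theorem comp_finite (c k : ℕ) : ({a : Fin (d + 1) → ℕ | c + ∑ i, a i = k}).Finite := by
  refine Set.Finite.subset (Set.Finite.pi (fun _ => Set.finite_Iic k)) ?_
  intro a ha m _
  simp only [Set.mem_setOf_eq] at ha
  simp only [Set.mem_Iic]
  have : a m ≤ ∑ i, a i := Finset.single_le_sum (fun i _ => Nat.zero_le _) (Finset.mem_univ m)
  omega

theorem card_comp (d k c : ℕ) (hcd : c ≤ d + 1) (hk : 1 ≤ k) :
    Nat.card {a : Fin (d + 1) → ℕ // c + ∑ i, a i = k} = (k + d - c).choose d := by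
  rcases le_or_gt c k with h | h
  · have e1 : {a : Fin (d + 1) → ℕ // c + ∑ i, a i = k} ≃ {a : Fin (d+1) → ℕ // ∑ i, a i = k - c} :=
      Equiv.subtypeEquivRight (by intro a; omega)
    rw [Nat.card_congr e1, Nat.card_congr (Sym.equivNatSumOfFintype (Fin (d + 1)) (k - c)).symm,
      Nat.card_eq_fintype_card, Sym.card_sym_eq_choose, Fintype.card_fin]
    rw [show d + 1 + (k - c) - 1 = k + d - c by omega,
      ← Nat.choose_symm (by omega : d ≤ k + d - c)]
    congr 1
    omega
  · have he : IsEmpty {a : Fin (d + 1) → ℕ // c + ∑ i, a i = k} := by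
      refine ⟨fun ⟨a, ha⟩ => ?_⟩
      omega
    rw [Nat.card_of_isEmpty]
    symm
    exact Nat.choose_eq_zero_of_lt (by omega)

end Counting

section Main

variable {n d : ℕ}

theorem ceil_eq_one {t : ℝ} (h1 : 0 < t) (h2 : t ≤ 1) : ⌈t⌉ = 1 :=
  Int.ceil_eq_iff.2 ⟨by push_cast; linarith, by push_cast; linarith⟩

theorem card_ehrM {v : Fin (d + 1) → Fin n → ℤ} (hv : AffineIndependent ℝ (ehrV v))
    (k : ℕ) (hk : 1 ≤ k) :
    Nat.card ↥(ehrM v k) =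
      ∑ j : Fin (d + 1), Nat.card ↥(ehrBox v ((j : ℕ) + 1)) * ((k + d - ((j : ℕ) + 1)).choose d) := by
  classical
  set F := fun x : (Σ j : Fin (d + 1),
      ↥(ehrBox v ((j : ℕ) + 1)) × {a : Fin (d + 1) → ℕ // (j : ℕ) + 1 + ∑ i, a i = k}) =>
    (fun i => x.2.1.1 i + (x.2.2.1 i : ℝ) : Fin (d + 1) → ℝ) with hF
  have hmem : ∀ x, F x ∈ ehrM v k := by
    rintro ⟨j, ⟨t, ht1, ht2, ht3⟩, ⟨a, ha⟩⟩
    refine ⟨fun i => ?_, ?_, ?_⟩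
    · simp only [hF]
      have h1 := (ht1 i).1
      positivity
    · simp only [hF]
      rw [Finset.sum_add_distrib, ht2, ← Nat.cast_sum]
      have : ((j : ℕ) : ℝ) + 1 + ((∑ i, a i : ℕ) : ℝ) = (k : ℝ) := by
        exact_mod_cast congrArg (Nat.cast (R := ℝ)) ha
      push_cast at this ⊢
      linarith
    · intro m
      obtain ⟨z, hz⟩ := ht3 m
      refine ⟨z + ∑ i, (a i : ℤ) * v i m, ?_⟩
      simp only [hF, add_mul]
      rw [Finset.sum_add_distrib, hz]
      push_cast
      ring
  have hbij : Function.Bijective (fun x => (⟨F x, hmem x⟩ : ↥(ehrM v k))) := by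
    constructor
    · rintro ⟨j, ⟨t, ht1, ht2, ht3⟩, ⟨a, ha⟩⟩ ⟨j', ⟨t', ht1', ht2', ht3'⟩, ⟨a', ha'⟩⟩ h
      have hμ : (fun i => t i + (a i : ℝ)) = (fun i => t' i + (a' i : ℝ)) := by
        simpa [hF] using congrArg Subtype.val h
      have haa : a = a' := by
        funext i
        have hi := congrFun hμ i
        have h1 : ((a i : ℤ) : ℝ) + 1 = ⌈t i + (a i : ℝ)⌉ := by
          rw [show (t i + (a i : ℝ)) = t i + ((a i : ℤ) : ℝ) by push_cast; ring,
            Int.ceil_add_intCast, ceil_eq_one (ht1 i).1 (ht1 i).2]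
          push_cast; ring
        have h2 : ((a' i : ℤ) : ℝ) + 1 = ⌈t' i + (a' i : ℝ)⌉ := by
          rw [show (t' i + (a' i : ℝ)) = t' i + ((a' i : ℤ) : ℝ) by push_cast; ring,
            Int.ceil_add_intCast, ceil_eq_one (ht1' i).1 (ht1' i).2]
          push_cast; ring
        have : ((a i : ℤ) : ℝ) + 1 = ((a' i : ℤ) : ℝ) + 1 := by rw [h1, h2, hi]
        exact_mod_cast (by linarith : ((a i : ℤ) : ℝ) = ((a' i : ℤ) : ℝ))
      have htt : t = t' := by
        funext i
        have hi := congrFun hμ i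
        rw [haa] at hi
        linarith
      have hjj : j = j' := by
        have h4 : (((j : ℕ) + 1 : ℕ) : ℝ) = (((j' : ℕ) + 1 : ℕ) : ℝ) := by
          push_cast
          push_cast at ht2 ht2'
          rw [← ht2, ← ht2', htt]
        have h5 : (j : ℕ) + 1 = (j' : ℕ) + 1 := by exact_mod_cast h4
        exact Fin.ext (by omega)
      subst hjj
      subst haa
      subst htt
      rfl
    · rintro ⟨μ, hμ1, hμ2, hμ3⟩
      set a : Fin (d + 1) → ℕ := fun i => (⌈μ i⌉ - 1).toNat with haDef
      have hca : ∀ i, ((a i : ℤ) : ℝ) = (⌈μ i⌉ : ℝ) - 1 := by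
        intro i
        have h1 : (1 : ℤ) ≤ ⌈μ i⌉ := Int.ceil_pos.2 (hμ1 i)
        rw [haDef]
        push_cast [Int.toNat_of_nonneg (by omega : (0:ℤ) ≤ ⌈μ i⌉ - 1)]
        ring
      set t : Fin (d + 1) → ℝ := fun i => μ i - (a i : ℝ) with htDef
      have hcast : ∀ i, ((a i : ℝ)) = ((a i : ℤ) : ℝ) := fun i => by push_cast; ring
      have ht1 : ∀ i, 0 < t i ∧ t i ≤ 1 := by
        intro i
        constructor
        · have := Int.ceil_lt_add_one (μ i)
          simp only [htDef]
          rw [hcast i, hca i]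
          linarith
        · have := Int.le_ceil (μ i)
          simp only [htDef]
          rw [hcast i, hca i]
          linarith
      have hts : ∑ i, t i = (k : ℝ) - ((∑ i, a i : ℕ) : ℝ) := by
        simp only [htDef]
        rw [Finset.sum_sub_distrib, hμ2]
        push_cast
        ring
      have htpos : (0 : ℝ) < ∑ i, t i :=
        Finset.sum_pos (fun i _ => (ht1 i).1) Finset.univ_nonempty
      have htle : ∑ i, t i ≤ (d : ℝ) + 1 := by
        calc ∑ i, t i ≤ ∑ _i : Fin (d + 1), (1 : ℝ) :=
              Finset.sum_le_sum fun i _ => (ht1 i).2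
          _ = (d : ℝ) + 1 := by simp
      have hsa1 : (∑ i, a i) < k := by
        by_contra hcon
        push_neg at hcon
        have hge : (k : ℝ) ≤ ((∑ i, a i : ℕ) : ℝ) := by exact_mod_cast hcon
        rw [hts] at htpos
        linarith
      have hsa2 : k ≤ (∑ i, a i) + d + 1 := by
        by_contra hcon
        push_neg at hcon
        have hlt : ((∑ i, a i : ℕ) : ℝ) + (d : ℝ) + 1 < (k : ℝ) := by
          exact_mod_cast hcon
        rw [hts] at htle
        linarith
      refine ⟨⟨⟨k - (∑ i, a i) - 1, by omega⟩, ⟨t, ht1, ?_, ?_⟩,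
        ⟨a, show k - (∑ i, a i) - 1 + 1 + ∑ i, a i = k by omega⟩⟩, ?_⟩
      · show ∑ i, t i = ((k - (∑ i, a i) - 1 + 1 : ℕ) : ℝ)
        rw [hts, show k - (∑ i, a i) - 1 + 1 = k - (∑ i, a i) by omega,
          Nat.cast_sub (le_of_lt hsa1)]
      · intro m
        obtain ⟨z, hz⟩ := hμ3 m
        refine ⟨z - ∑ i, (a i : ℤ) * v i m, ?_⟩
        simp only [htDef, sub_mul]
        rw [Finset.sum_sub_distrib, hz]
        push_cast
        ring
      · refine Subtype.ext (funext fun i => ?_)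
        simp only [hF, htDef]
        ring
  rw [Nat.card_congr (Equiv.ofBijective _ hbij).symm]
  haveI hB : ∀ j : Fin (d + 1), Finite ↥(ehrBox v ((j : ℕ) + 1)) :=
    fun j => (ehrBox_finite hv _).to_subtype
  haveI hC : ∀ j : Fin (d + 1), Finite {a : Fin (d + 1) → ℕ // (j : ℕ) + 1 + ∑ i, a i = k} :=
    fun j => Set.Finite.to_subtype (comp_finite ((j : ℕ) + 1) k)
  haveI : ∀ j : Fin (d + 1), Fintype ↥(ehrBox v ((j : ℕ) + 1)) :=
    fun j => Fintype.ofFinite _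
  haveI : ∀ j : Fin (d + 1), Fintype {a : Fin (d + 1) → ℕ // (j : ℕ) + 1 + ∑ i, a i = k} :=
    fun j => Fintype.ofFinite _
  rw [Nat.card_eq_fintype_card, Fintype.card_sigma]
  refine Finset.sum_congr rfl fun j _ => ?_
  rw [Fintype.card_prod, ← Nat.card_eq_fintype_card, ← Nat.card_eq_fintype_card,
    card_comp d k ((j : ℕ) + 1) (Nat.succ_le_succ (Fin.is_le j)) hk]

end Main

section Glue

variable {n d : ℕ}

theorem smul_ehrS (v : Fin (d + 1) → Fin n → ℤ) {c : ℝ} (hc : 0 < c) :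
    c • ehrS v 1 = ehrS v c := by
  ext x
  constructor
  · intro hx
    rw [Set.mem_smul_set] at hx
    obtain ⟨y, ⟨w, hw0, hw1, hw2⟩, rfl⟩ := hx
    refine ⟨fun i => c * w i, fun i => mul_pos hc (hw0 i), ?_, ?_⟩
    · rw [← Finset.mul_sum, hw1, mul_one]
    · rw [← hw2, Finset.smul_sum]
      exact Finset.sum_congr rfl fun i _ => (smul_smul c (w i) (ehrV v i)).symm
  · rintro ⟨μ, hμ0, hμ1, hμ2⟩
    rw [Set.mem_smul_set]
    refine ⟨∑ i, (c⁻¹ * μ i) • ehrV v i,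
      ⟨fun i => c⁻¹ * μ i, fun i => mul_pos (inv_pos.2 hc) (hμ0 i),
        by rw [← Finset.mul_sum, hμ1, inv_mul_cancel₀ hc.ne'], rfl⟩, ?_⟩
    rw [Finset.smul_sum, ← hμ2]
    exact Finset.sum_congr rfl fun i _ => by
      rw [smul_smul, ← mul_assoc, mul_inv_cancel₀ hc.ne', one_mul]

theorem image_ehrFl {v : Fin (d + 1) → Fin n → ℤ} (k : ℕ) :
    ehrFl v '' (ehrM v k) = {p : Fin n → ℤ | (fun m => (p m : ℝ)) ∈ ehrS v (k : ℝ)} := by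
  ext p
  constructor
  · rintro ⟨μ, ⟨h1, h2, h3⟩, rfl⟩
    refine ⟨μ, h1, h2, funext fun m => ?_⟩
    obtain ⟨z, hz⟩ := h3 m
    have h4 : ehrFl v μ m = z := by simp only [ehrFl]; rw [hz, Int.floor_intCast]
    show (∑ i, μ i • ehrV v i) m = ((ehrFl v μ m : ℤ) : ℝ)
    rw [h4, show (∑ i, μ i • ehrV v i) m = ∑ i, μ i * (v i m : ℝ) from by
      simp [Finset.sum_apply, ehrV], hz]
  · rintro ⟨μ, h1, h2, h3⟩
    have h4 : ∀ m, ∑ i, μ i * (v i m : ℝ) = ((p m : ℤ) : ℝ) := fun m => by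
      have h5 := congrFun h3 m
      simpa [Finset.sum_apply, ehrV] using h5
    refine ⟨μ, ⟨h1, h2, fun m => ⟨p m, h4 m⟩⟩, funext fun m => ?_⟩
    simp only [ehrFl]
    rw [h4 m, Int.floor_intCast]

theorem injOn_ehrFl {v : Fin (d + 1) → Fin n → ℤ} (hv : AffineIndependent ℝ (ehrV v)) (k : ℕ) :
    Set.InjOn (ehrFl v) (ehrM v k) := by
  rintro t ⟨ht1, ht2, ht3⟩ t' ⟨ht1', ht2', ht3'⟩ h
  refine ehr_uniq hv (by rw [ht2, ht2']) fun m => ?_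
  obtain ⟨z, hz⟩ := ht3 m
  obtain ⟨z', hz'⟩ := ht3' m
  have h1 : ehrFl v t m = z := by simp only [ehrFl]; rw [hz, Int.floor_intCast]
  have h2 : ehrFl v t' m = z' := by simp only [ehrFl]; rw [hz', Int.floor_intCast]
  have : z = z' := by rw [← h1, ← h2, h]
  rw [hz, hz', this]

end Glue

/-- The counting function of an open lattice simplex is a polynomial. -/
theorem stmt16 {n d : ℕ} (v : Fin (d + 1) → (Fin n → ℤ))
    (hv : AffineIndependent ℝ (fun i => fun j => ((v i j : ℝ))))
    (S : Set (Fin n → ℝ))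
    (hS : S = intrinsicInterior ℝ
      (convexHull ℝ (Set.range (fun i => fun j => ((v i j : ℝ)))))) :
    ∃ p : Polynomial ℚ, ∀ k : ℕ, 1 ≤ k →
      (latticeCount ((k : ℝ) • S) : ℚ) = p.eval (k : ℚ) := by
  have hv' : AffineIndependent ℝ (ehrV v) := hv
  have hSchar : S = ehrS v 1 := by
    rw [hS, intrinsicInterior_convexHull_range hv]
    rfl
  refine ⟨∑ j : Fin (d + 1),
    Polynomial.C ((Nat.card ↥(ehrBox v ((j : ℕ) + 1)) : ℚ) / (d.factorial : ℚ)) *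
      ((descPochhammer ℚ d).comp (Polynomial.X + Polynomial.C ((d : ℚ) - (((j : ℕ) : ℚ) + 1)))),
    fun k hk => ?_⟩
  have hcpos : (0 : ℝ) < (k : ℝ) := by exact_mod_cast hk
  have hcount : latticeCount ((k : ℝ) • S) = Nat.card ↥(ehrM v k) := by
    rw [latticeCount, hSchar, smul_ehrS v hcpos, ← image_ehrFl k,
      Set.ncard_image_of_injOn (injOn_ehrFl hv' k), ← Nat.card_coe_set_eq]
  rw [hcount, card_ehrM hv' k hk, Polynomial.eval_finset_sum]
  push_cast
  refine Finset.sum_congr rfl fun j _ => ?_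
  rw [Polynomial.eval_mul, Polynomial.eval_C, Polynomial.eval_comp, Polynomial.eval_add,
    Polynomial.eval_X, Polynomial.eval_C]
  have hle : (j : ℕ) + 1 ≤ k + d := by
    have := Fin.is_le j
    omega
  have harg : (k : ℚ) + ((d : ℚ) - (((j : ℕ) : ℚ) + 1)) = ((k + d - ((j : ℕ) + 1) : ℕ) : ℚ) := by
    push_cast [Nat.cast_sub hle]
    ring
  rw [harg, descPochhammer_eval_eq_descFactorial,
    Nat.descFactorial_eq_factorial_mul_choose]
  have hfac : ((d.factorial : ℚ)) ≠ 0 := Nat.cast_ne_zero.2 (Nat.factorial_ne_zero d)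
  push_cast
  field_simp
end

section
/- Every rational polytope P in ℝ¹ (a closed interval [a,b] with a ≤ b rational) has the following property: the minimum quasi-period of its lattice-point counting function k ↦ |k[a,b] ∩ ℤ| equals the denominator of P; i.e., quasi-period collapse cannot occur in dimension 1. -/
/-- Number of integers in the `k`-th dilate of the rational interval `[a,b]`. -/
noncomputable def intervalCount (a b : ℚ) (k : ℤ) : ℕ :=
  {z : ℤ | (k : ℚ) * a ≤ (z : ℚ) ∧ (z : ℚ) ≤ (k : ℚ) * b}.ncard

/-- `N` is a quasi-period of the counting function of `[a,b]`: the counting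
function is given by a degree-≤1 quasi-polynomial whose coefficient functions
are periodic with period `N`. -/
def IsQuasiPeriod (a b : ℚ) (N : ℕ) : Prop :=
  ∃ c₀ c₁ : ℤ → ℚ, (∀ j : ℤ, c₀ (j + N) = c₀ j) ∧ (∀ j : ℤ, c₁ (j + N) = c₁ j) ∧
    ∀ k : ℤ, 0 < k → (intervalCount a b k : ℚ) = c₁ k * (k : ℚ) + c₀ k

/-- The fractional defect function. -/
noncomputable def Fdef (a b : ℚ) (k : ℤ) : ℚ :=
  Int.fract ((k : ℚ) * b) + Int.fract (-((k : ℚ) * a))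

lemma Fdef_nonneg (a b : ℚ) (k : ℤ) : 0 ≤ Fdef a b k :=
  add_nonneg (Int.fract_nonneg _) (Int.fract_nonneg _)

lemma Fdef_lt_two (a b : ℚ) (k : ℤ) : Fdef a b k < 2 := by
  have h1 := Int.fract_lt_one ((k : ℚ) * b)
  have h2 := Int.fract_lt_one (-((k : ℚ) * a))
  unfold Fdef; linarith

lemma count_eq (a b : ℚ) (hab : a ≤ b) (k : ℤ) (hk : 0 < k) :
    (intervalCount a b k : ℚ) = (k : ℚ) * (b - a) + 1 - Fdef a b k := by
  have hset : {z : ℤ | (k : ℚ) * a ≤ (z : ℚ) ∧ (z : ℚ) ≤ (k : ℚ) * b}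
      = ↑(Finset.Icc ⌈(k:ℚ)*a⌉ ⌊(k:ℚ)*b⌋) := by
    ext z
    simp [Int.ceil_le, Int.le_floor]
  have hkab : (k : ℚ) * a ≤ (k : ℚ) * b := by
    have hk' : (0:ℚ) < (k:ℚ) := by exact_mod_cast hk
    nlinarith
  have hle : ⌈(k:ℚ)*a⌉ ≤ ⌊(k:ℚ)*b⌋ + 1 := by
    calc ⌈(k:ℚ)*a⌉ ≤ ⌈(k:ℚ)*b⌉ := Int.ceil_le_ceil hkab
    _ ≤ ⌊(k:ℚ)*b⌋ + 1 := Int.ceil_le_floor_add_one _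
  have hcount : (intervalCount a b k : ℤ) = ⌊(k:ℚ)*b⌋ - ⌈(k:ℚ)*a⌉ + 1 := by
    rw [intervalCount, hset, Set.ncard_coe_finset, Int.card_Icc]
    omega
  have h1 : Int.fract ((k:ℚ)*b) = (k:ℚ)*b - ⌊(k:ℚ)*b⌋ := rfl
  have h2 : Int.fract (-((k:ℚ)*a)) = -((k:ℚ)*a) - ⌊-((k:ℚ)*a)⌋ := rfl
  have h3 : ⌊-((k:ℚ)*a)⌋ = -⌈(k:ℚ)*a⌉ := Int.floor_neg
  have hq : (intervalCount a b k : ℚ) = (⌊(k:ℚ)*b⌋ : ℚ) - (⌈(k:ℚ)*a⌉ : ℚ) + 1 := by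
    exact_mod_cast congrArg (fun z : ℤ => (z : ℚ)) hcount
  rw [hq]; unfold Fdef; rw [h1, h2, h3]; push_cast; ring

/-- Periodicity of `Fdef` from a quasi-period. -/
lemma Fdef_periodic (a b : ℚ) (hab : a ≤ b) (N : ℕ)
    (h : IsQuasiPeriod a b N) (k : ℤ) (hk : 0 < k) :
    Fdef a b (k + N) = Fdef a b k := by
  obtain ⟨c₀, c₁, h₀, h₁, hrep⟩ := h
  have hper : ∀ (c : ℤ → ℚ), (∀ j, c (j + N) = c j) → ∀ t : ℕ, c (k + t * N) = c k := by
    intro c hc t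
    induction t with
    | zero => simp
    | succ n ih =>
      have e : (k + ((n:ℤ) + 1) * N : ℤ) = (k + (n:ℤ) * N) + N := by ring
      push_cast
      rw [e, hc, ih]
  have hval : ∀ t : ℕ, Fdef a b (k + t * N) =
      ((k:ℚ) + t * N) * (b - a) + 1 - (c₁ k * ((k:ℚ) + t * N) + c₀ k) := by
    intro t
    have hkt : (0:ℤ) < k + t * N := by
      have : (0:ℤ) ≤ (t:ℤ) * N := by positivity
      omega
    have hc := count_eq a b hab (k + t*N) hkt
    have hr := hrep (k + t*N) hkt
    rw [hper c₁ h₁ t, hper c₀ h₀ t] at hr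
    rw [hr] at hc
    have : Fdef a b (k + t*N) = ((k + t*N : ℤ) : ℚ) * (b-a) + 1 -
        (c₁ k * ((k + t*N : ℤ) : ℚ) + c₀ k) := by linarith
    rw [this]; push_cast; ring
  set B : ℚ := (N:ℚ) * (b - a - c₁ k) with hB
  have hlin : ∀ t : ℕ, Fdef a b (k + t * N) = Fdef a b k + (t:ℚ) * B := by
    intro t
    have e0 := hval 0
    have et := hval t
    simp at e0
    rw [et, hB, e0]
    ring
  have hB0 : B = 0 := by
    by_contra hne
    rcases lt_or_gt_of_ne hne with hneg | hpos
    · obtain ⟨t, ht⟩ := exists_nat_gt ((Fdef a b k) / (-B))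
      have h1 : Fdef a b k + (t:ℚ) * B < 0 := by
        rw [div_lt_iff₀ (by linarith : (0:ℚ) < -B)] at ht
        nlinarith
      have := Fdef_nonneg a b (k + t * N)
      rw [hlin t] at this
      linarith
    · obtain ⟨t, ht⟩ := exists_nat_gt ((2 - Fdef a b k) / B)
      have h1 : 2 < Fdef a b k + (t:ℚ) * B := by
        have : (2 - Fdef a b k) < (t:ℚ) * B := by
          rw [div_lt_iff₀ hpos] at ht; linarith
        linarith
      have := Fdef_lt_two a b (k + t * N)
      rw [hlin t] at this
      linarith
  have h1 := hlin 1
  rw [hB0] at h1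
  simpa using h1

lemma den_one_int (q : ℚ) (h : q.den = 1) : ∃ z : ℤ, q = (z : ℚ) :=
  ⟨q.num, ((Rat.den_eq_one_iff q).mp h).symm⟩

/-- In dimension 1, the minimum quasi-period equals the denominator:
no quasi-period collapse occurs. -/
theorem stmt17 (a b : ℚ) (hab : a ≤ b) (d : ℕ)
    (hd : IsLeast {m : ℕ | 0 < m ∧ ((m : ℚ) * a).den = 1 ∧ ((m : ℚ) * b).den = 1} d) :
    IsLeast {N : ℕ | 0 < N ∧ IsQuasiPeriod a b N} d := by
  obtain ⟨⟨hdpos, hda, hdb⟩, hlb⟩ := hd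
  constructor
  · -- d is a quasi-period
    refine ⟨hdpos, ?_⟩
    obtain ⟨za, hza⟩ := den_one_int _ hda
    obtain ⟨zb, hzb⟩ := den_one_int _ hdb
    refine ⟨fun k => 1 - Fdef a b k, fun _ => b - a, ?_, fun _ => rfl, ?_⟩
    · intro j
      have ea : ((j + (d:ℤ) : ℤ) : ℚ) * a = (za:ℚ) + (j:ℚ) * a := by
        push_cast; rw [add_mul, ← hza]; push_cast; ring
      have eb : ((j + (d:ℤ) : ℤ) : ℚ) * b = (zb:ℚ) + (j:ℚ) * b := by
        push_cast; rw [add_mul, ← hzb]; push_cast; ring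
      unfold Fdef
      push_cast at ea eb ⊢
      rw [ea, eb, Int.fract_intCast_add, show -((za:ℚ) + (j:ℚ)*a) = (-za : ℤ) + -((j:ℚ)*a) by push_cast; ring, Int.fract_intCast_add]
    · intro k hk
      rw [count_eq a b hab k hk]; ring
  · -- lower bound
    rintro N ⟨hNpos, hqp⟩
    -- show N*a and N*b are integers
    set q : ℕ := ((N:ℚ)*a).den * ((N:ℚ)*b).den with hq
    have hqpos : 0 < q := Nat.mul_pos ((N:ℚ)*a).den_pos ((N:ℚ)*b).den_pos
    have hqa : ∃ z : ℤ, (q:ℚ) * ((N:ℚ)*a) = (z:ℚ) := by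
      refine ⟨((N:ℚ)*a).num * ((N:ℚ)*b).den, ?_⟩
      rw [hq]
      push_cast
      rw [show (((N:ℚ)*a).den : ℚ) * (((N:ℚ)*b).den : ℚ) * ((N:ℚ)*a)
          = (((N:ℚ)*a) * (((N:ℚ)*a).den : ℚ)) * (((N:ℚ)*b).den : ℚ) by ring,
        Rat.mul_den_eq_num]
    have hqb : ∃ z : ℤ, (q:ℚ) * ((N:ℚ)*b) = (z:ℚ) := by
      refine ⟨((N:ℚ)*b).num * ((N:ℚ)*a).den, ?_⟩
      rw [hq]
      push_cast
      rw [show (((N:ℚ)*a).den : ℚ) * (((N:ℚ)*b).den : ℚ) * ((N:ℚ)*b)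
          = (((N:ℚ)*b) * (((N:ℚ)*b).den : ℚ)) * (((N:ℚ)*a).den : ℚ) by ring,
        Rat.mul_den_eq_num]
    obtain ⟨wa, hwa⟩ := hqa
    obtain ⟨wb, hwb⟩ := hqb
    set k₀ : ℤ := (q:ℤ) * N with hk₀
    have hk₀pos : 0 < k₀ := by positivity
    have hper := Fdef_periodic a b hab N hqp k₀ hk₀pos
    -- compute both sides
    have ek₀a : (k₀:ℚ) * a = (wa:ℚ) := by
      rw [hk₀]; push_cast; rw [← hwa]; push_cast; ring
    have ek₀b : (k₀:ℚ) * b = (wb:ℚ) := by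
      rw [hk₀]; push_cast; rw [← hwb]; push_cast; ring
    have hRHS : Fdef a b k₀ = 0 := by
      unfold Fdef
      rw [ek₀a, ek₀b]
      rw [show -((wa:ℚ)) = ((-wa : ℤ) : ℚ) by push_cast; ring]
      simp [Int.fract_intCast]
    have hLHS : Fdef a b (k₀ + N) =
        Int.fract ((N:ℚ) * b) + Int.fract (-((N:ℚ) * a)) := by
      unfold Fdef
      have e1 : ((k₀ + (N:ℤ) : ℤ) : ℚ) * b = (wb:ℚ) + (N:ℚ) * b := by
        push_cast; rw [add_mul, ek₀b]
      have e2 : -(((k₀ + (N:ℤ) : ℤ) : ℚ) * a) = (-wa : ℤ) + -((N:ℚ) * a) := by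
        push_cast
        rw [add_mul, ek₀a]
        ring
      push_cast at e1 e2 ⊢
      rw [e1, e2]
      rw [show (wb:ℚ) + (N:ℚ)*b = ((wb:ℤ):ℚ) + (N:ℚ)*b by push_cast; ring, Int.fract_intCast_add]
      rw [show (-(wa:ℚ)) + -((N:ℚ)*a) = ((-wa:ℤ):ℚ) + -((N:ℚ)*a) by push_cast; ring, Int.fract_intCast_add]
    rw [hRHS, hLHS] at hper
    have hfb : Int.fract ((N:ℚ) * b) = 0 :=
      le_antisymm (by linarith [Int.fract_nonneg (-((N:ℚ)*a))]) (Int.fract_nonneg _)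
    have hfa : Int.fract (-((N:ℚ) * a)) = 0 :=
      le_antisymm (by linarith [Int.fract_nonneg ((N:ℚ)*b)]) (Int.fract_nonneg _)
    -- conclude denominators are 1
    have hNb : ((N:ℚ) * b) = ((⌊(N:ℚ)*b⌋ : ℤ) : ℚ) := by
      unfold Int.fract at hfb
      linarith [hfb]
    have hNa : ((N:ℚ) * a) = ((-⌊-((N:ℚ)*a)⌋ : ℤ) : ℚ) := by
      unfold Int.fract at hfa
      push_cast
      linarith [hfa]
    apply hlb
    refine ⟨hNpos, ?_, ?_⟩
    · rw [hNa]; exact Rat.den_intCast _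
    · rw [hNb]; exact Rat.den_intCast _
end
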